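/- (Existence of traveling waves, sufficiency.) Assume the Fisher-KPP conditions and hypothesis (H). Then for every c ≥ c*(α) there exists a nondecreasing traveling wave U with speed c, i.e., a continuously differentiable nondecreasing U : ℝ → [0,1] with c·U′(ξ) = (1/6)·𝒟_h[U](ξ) + f(U(ξ)) for all ξ, lim_{ξ→−∞} U(ξ) = 0 and lim_{ξ→+∞} U(ξ) = 1. -/

import Mathlib

open Real Set Filter

noncomputable def delta1 (α : ℝ) : ℝ := Real.cos α
noncomputable def delta2 (α : ℝ) : ℝ := (1/2) * Real.cos α + (Real.sqrt 3 / 2) * Real.sin α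
noncomputable def delta3 (α : ℝ) : ℝ := (1/2) * Real.cos α - (Real.sqrt 3 / 2) * Real.sin α

/-- The function g_α(λ) from the minimal wave speed formula, with `a` playing the role of f'(0). -/
noncomputable def gfun (a α l : ℝ) : ℝ :=
  (1/6) * ((Real.exp (l * delta1 α) + Real.exp (-(l * delta1 α)))
    + (Real.exp (l * delta2 α) + Real.exp (-(l * delta2 α)))
    + (Real.exp (l * delta3 α) + Real.exp (-(l * delta3 α)))) - 1 + a

/-- The minimal wave speed c*(α) = inf_{λ>0} g_α(λ)/λ. -/
noncomputable def cstar (a α : ℝ) : ℝ := sInf {c : ℝ | ∃ l : ℝ, 0 < l ∧ c = gfun a α l / l}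

/-- The discrete diffusion operator on the hexagonal lattice, in direction α. -/
noncomputable def Dh (α : ℝ) (U : ℝ → ℝ) (ξ : ℝ) : ℝ :=
  (U (ξ + delta1 α) + U (ξ - delta1 α)) + (U (ξ + delta2 α) + U (ξ - delta2 α))
    + (U (ξ + delta3 α) + U (ξ - delta3 α)) - 6 * U ξ

/-- Fisher-KPP conditions: f is C¹ on [0,1] with derivative f', f(0)=f(1)=0, f'(0)>0,
and 0 < f(s) ≤ f'(0)·s on (0,1). -/
def FisherKPP (f f' : ℝ → ℝ) : Prop :=
  (∀ s ∈ Set.Icc (0:ℝ) 1, HasDerivAt f (f' s) s) ∧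
  ContinuousOn f' (Set.Icc (0:ℝ) 1) ∧
  f 0 = 0 ∧ f 1 = 0 ∧ 0 < f' 0 ∧
  (∀ s ∈ Set.Ioo (0:ℝ) 1, 0 < f s ∧ f s ≤ f' 0 * s)

/-- A traveling wave with speed c: a C¹ function U : ℝ → [0,1] solving
c·U′ = (1/6)·𝒟_h[U] + f(U) with limits 0 at −∞ and 1 at +∞. -/
def IsTravelingWave (α : ℝ) (f : ℝ → ℝ) (c : ℝ) (U : ℝ → ℝ) : Prop :=
  ContDiff ℝ 1 U ∧ (∀ ξ, U ξ ∈ Set.Icc (0:ℝ) 1) ∧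
  (∀ ξ, c * deriv U ξ = (1/6) * Dh α U ξ + f (U ξ)) ∧
  Filter.Tendsto U Filter.atBot (nhds 0) ∧ Filter.Tendsto U Filter.atTop (nhds 1)


open Topology MeasureTheory intervalIntegral


section Helpers

/-- Monotonicity on an interval from pointwise derivatives. -/
lemma mono_piece {φ : ℝ → ℝ} {x y : ℝ} (hxy : x ≤ y) (hc : Continuous φ)
    (hd : ∀ t ∈ Ioo x y, ∃ d, HasDerivAt φ d t ∧ 0 ≤ d) : φ x ≤ φ y := by
  have hmono : MonotoneOn φ (Icc x y) := by
    apply monotoneOn_of_deriv_nonneg (convex_Icc x y) hc.continuousOn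
    · intro t ht
      rw [interior_Icc] at ht
      exact ((hd t ht).choose_spec.1).differentiableAt.differentiableWithinAt
    · intro t ht
      rw [interior_Icc] at ht
      obtain ⟨d, hdd, hd0⟩ := hd t ht
      rw [hdd.deriv]; exact hd0
  exact hmono (left_mem_Icc.2 hxy) (right_mem_Icc.2 hxy) hxy

/-- Monotonicity allowing one exceptional point. -/
lemma mono_piece_exc {φ : ℝ → ℝ} {x y p : ℝ} (hxy : x ≤ y) (hc : Continuous φ)
    (hd : ∀ t ∈ Ioo x y, t ≠ p → ∃ d, HasDerivAt φ d t ∧ 0 ≤ d) : φ x ≤ φ y := by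
  rcases le_or_gt p x with h | h
  · exact mono_piece hxy hc fun t ht => hd t ht (by rcases ht with ⟨h1, _⟩; exact ne_of_gt (lt_of_le_of_lt h h1))
  rcases le_or_gt y p with h' | h'
  · exact mono_piece hxy hc fun t ht => hd t ht (by rcases ht with ⟨_, h2⟩; exact ne_of_lt (lt_of_lt_of_le h2 h'))
  · have h1 : φ x ≤ φ p := mono_piece h.le hc
      (fun t ht => hd t ⟨ht.1, ht.2.trans h'⟩ (ne_of_lt ht.2))
    have h2 : φ p ≤ φ y := mono_piece h'.le hc
      (fun t ht => hd t ⟨h.trans ht.1, ht.2⟩ (ne_of_gt ht.1))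
    linarith

/-- Lipschitz estimate from a pointwise derivative bound. -/
lemma lips_of_deriv {φ : ℝ → ℝ} {C : ℝ} (h : ∀ t, ∃ d, HasDerivAt φ d t ∧ |d| ≤ C)
    (s t : ℝ) : |φ s - φ t| ≤ C * |s - t| := by
  have := (convex_univ (𝕜 := ℝ) (E := ℝ)).norm_image_sub_le_of_norm_hasDerivWithin_le
    (f := φ) (f' := fun u => (h u).choose) (C := C)
    (fun u _ => ((h u).choose_spec.1).hasDerivWithinAt)
    (fun u _ => by simpa [Real.norm_eq_abs] using (h u).choose_spec.2)
    (mem_univ t) (mem_univ s)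
  simpa [Real.norm_eq_abs] using this

lemma cont_of_lip {φ : ℝ → ℝ} {K : ℝ} (hK : 0 ≤ K)
    (h : ∀ s t, |φ s - φ t| ≤ K * |s - t|) : Continuous φ := by
  have : LipschitzWith ⟨K, hK⟩ φ := by
    apply LipschitzWith.of_dist_le_mul
    intro s t
    rw [Real.dist_eq, Real.dist_eq]; exact h s t
  exact this.continuous

/-- Equi-Lipschitz pointwise convergence gives uniform closeness on compacts. -/
lemma eventually_close {ι : Type*} {l : Filter ι} [l.NeBot] {F : ι → ℝ → ℝ} {G : ℝ → ℝ} {K : ℝ}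
    (hK : 0 ≤ K) (hL : ∀ i s t, |F i s - F i t| ≤ K * |s - t|)
    (hp : ∀ t, Tendsto (fun i => F i t) l (𝓝 (G t)))
    (x y ε : ℝ) (hε : 0 < ε) :
    ∀ᶠ i in l, ∀ t ∈ Icc x y, |F i t - G t| ≤ ε := by
  have hGL : ∀ s t, |G s - G t| ≤ K * |s - t| := by
    intro s t
    have h1 : Tendsto (fun i => |F i s - F i t|) l (𝓝 |G s - G t|) :=
      ((hp s).sub (hp t)).abs
    exact le_of_tendsto h1 (Eventually.of_forall fun i => hL i s t)
  set r : ℝ := ε / (3 * (K + 1)) with hr_def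
  have hr : 0 < r := by positivity
  obtain ⟨S, hS⟩ := (isCompact_Icc (a := x) (b := y)).elim_finite_subcover
    (fun t₀ : ℝ => Metric.ball t₀ r) (fun _ => Metric.isOpen_ball)
    (fun t ht => mem_iUnion.2 ⟨t, Metric.mem_ball_self hr⟩)
  have hev : ∀ᶠ i in l, ∀ t₀ ∈ S, |F i t₀ - G t₀| < ε / 3 := by
    rw [Filter.eventually_all_finset]
    intro t₀ _
    have := Metric.tendsto_nhds.1 (hp t₀) (ε / 3) (by positivity)
    simpa [Real.dist_eq] using this
  filter_upwards [hev] with i hi t ht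
  obtain ⟨t₀, ht₀S, ht₀⟩ : ∃ t₀ ∈ S, t ∈ Metric.ball t₀ r := by
    have := hS ht
    simpa using this
  have hd : |t - t₀| < r := by
    have := ht₀
    rwa [Metric.mem_ball, Real.dist_eq] at this
  have hKr : K * r ≤ ε / 3 := by
    have h1 : K * r = K * ε / (3 * (K + 1)) := by rw [hr_def]; ring
    rw [h1, div_le_div_iff₀ (by positivity) (by norm_num : (0:ℝ) < 3)]
    nlinarith
  have h1 : |F i t - F i t₀| ≤ ε / 3 := by
    calc |F i t - F i t₀| ≤ K * |t - t₀| := hL i t t₀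
    _ ≤ K * r := by nlinarith [abs_nonneg (t - t₀)]
    _ ≤ ε / 3 := hKr
  have h2 : |G t₀ - G t| ≤ ε / 3 := by
    calc |G t₀ - G t| ≤ K * |t₀ - t| := hGL t₀ t
    _ ≤ K * r := by rw [abs_sub_comm]; nlinarith [abs_nonneg (t - t₀)]
    _ ≤ ε / 3 := hKr
  calc |F i t - G t| ≤ |F i t - F i t₀| + |F i t₀ - G t₀| + |G t₀ - G t| := by
        have := abs_sub_le (F i t) (F i t₀) (G t) 
        have := abs_sub_le (F i t₀) (G t₀) (G t)
        linarith [abs_sub_le (F i t) (F i t₀) (G t), abs_sub_le (F i t₀) (G t₀) (G t)]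
  _ ≤ ε := by linarith [(hi t₀ ht₀S).le]

/-- Interval integrals pass to the limit for equi-Lipschitz families. -/
lemma tendsto_intervalIntegral_of_equiLip {ι : Type*} {l : Filter ι} [l.NeBot]
    {F : ι → ℝ → ℝ} {G : ℝ → ℝ} {K : ℝ} (hK : 0 ≤ K)
    (hL : ∀ i s t, |F i s - F i t| ≤ K * |s - t|)
    (hp : ∀ t, Tendsto (fun i => F i t) l (𝓝 (G t))) (x y : ℝ) :
    Tendsto (fun i => ∫ t in x..y, F i t) l (𝓝 (∫ t in x..y, G t)) := by
  have hGL : ∀ s t, |G s - G t| ≤ K * |s - t| := by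
    intro s t
    exact le_of_tendsto (((hp s).sub (hp t)).abs) (Eventually.of_forall fun i => hL i s t)
  have hGc : Continuous G := cont_of_lip hK hGL
  rw [Metric.tendsto_nhds]
  intro ε hε
  have hden : (0:ℝ) < |y - x| + 1 := by positivity
  filter_upwards [eventually_close hK hL hp (min x y) (max x y) (ε / (2 * (|y - x| + 1)))
    (by positivity)] with i hi
  have hFc : Continuous (F i) := cont_of_lip hK (hL i)
  rw [Real.dist_eq, ← intervalIntegral.integral_sub (hFc.intervalIntegrable x y)
    (hGc.intervalIntegrable x y)]
  have hb : ∀ t ∈ Set.uIoc x y, ‖F i t - G t‖ ≤ ε / (2 * (|y - x| + 1)) := by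
    intro t ht
    have ht' : t ∈ Icc (min x y) (max x y) := ⟨le_of_lt ht.1, ht.2⟩
    simpa [Real.norm_eq_abs] using hi t ht'
  have := intervalIntegral.norm_integral_le_of_norm_le_const hb
  rw [Real.norm_eq_abs] at this
  calc |∫ t in x..y, (F i t - G t)| ≤ ε / (2 * (|y - x| + 1)) * |y - x| := this
  _ < ε := by
      rw [div_mul_eq_mul_div, div_lt_iff₀ (by positivity)]
      nlinarith [abs_nonneg (y - x)]

end Helpers



section IntHelpers

/-- Translation of a set integral over `Iic`. -/
lemma integral_Iic_comp_add (f : ℝ → ℝ) (ξ : ℝ) :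
    ∫ s in Iic ξ, f s = ∫ u in Iic (0:ℝ), f (u + ξ) := by
  rw [← MeasureTheory.integral_indicator measurableSet_Iic,
    ← MeasureTheory.integral_indicator measurableSet_Iic]
  rw [← MeasureTheory.integral_add_right_eq_self (fun x => (Iic ξ).indicator f x) ξ]
  congr 1
  funext u
  by_cases hu : u ≤ 0
  · simp [Set.indicator_apply, mem_Iic, hu, add_le_iff_nonpos_left]
  · simp [Set.indicator_apply, mem_Iic, hu, add_le_iff_nonpos_left]

lemma integrableOn_Iic_exp_mul {ρ : ℝ} (hρ : 0 < ρ) (x : ℝ) :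
    IntegrableOn (fun s => Real.exp (ρ * s)) (Iic x) := by
  have h0 : Integrable ((Iic (ρ * x)).indicator Real.exp) :=
    (integrable_indicator_iff measurableSet_Iic).2 (integrableOn_exp_Iic (ρ * x))
  have h1 : Integrable (fun s : ℝ => ((Iic (ρ * x)).indicator Real.exp) (ρ * s)) :=
    (MeasureTheory.integrable_comp_mul_left_iff _ (ne_of_gt hρ)).2 h0
  have h2 : (fun s : ℝ => ((Iic (ρ * x)).indicator Real.exp) (ρ * s))
      = (Iic x).indicator (fun s => Real.exp (ρ * s)) := by
    funext s
    by_cases hs : s ≤ x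
    · simp [Set.indicator_apply, mem_Iic, hs, mul_le_mul_iff_right₀ hρ]
    · simp [Set.indicator_apply, mem_Iic, hs, mul_le_mul_iff_right₀ hρ]
  rw [h2] at h1
  exact (integrable_indicator_iff measurableSet_Iic).1 h1

lemma integrableOn_Iic_exp_mul_bdd {ρ M : ℝ} (hρ : 0 < ρ) {W : ℝ → ℝ}
    (hW : Continuous W) (hM : ∀ s, |W s| ≤ M) (x : ℝ) :
    IntegrableOn (fun s => Real.exp (ρ * s) * W s) (Iic x) := by
  refine Integrable.mono' ((integrableOn_Iic_exp_mul hρ x).mul_const M) ?_ ?_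
  · exact (((Real.continuous_exp.comp (continuous_const.mul continuous_id)).mul
      hW).aestronglyMeasurable).restrict
  · refine Eventually.of_forall fun s => ?_
    have := hM s
    have he : 0 < Real.exp (ρ * s) := Real.exp_pos _
    rw [Real.norm_eq_abs, abs_mul, abs_of_pos he]
    nlinarith [abs_nonneg (W s)]

/-- Derivative of `ξ ↦ ∫ s in Iic ξ, G s`. -/
lemma hasDerivAt_integral_Iic {G : ℝ → ℝ} (hGc : Continuous G)
    (hGi : ∀ x : ℝ, IntegrableOn G (Iic x)) (ξ : ℝ) :
    HasDerivAt (fun x => ∫ s in Iic x, G s) (G ξ) ξ := by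
  have key : ∀ x : ℝ, ∫ s in Iic x, G s = (∫ s in Iic (0:ℝ), G s) + ∫ s in (0:ℝ)..x, G s := by
    intro x
    have := intervalIntegral.integral_Iic_sub_Iic (hGi 0) (hGi x)
    linarith
  have hder : HasDerivAt (fun x => (∫ s in Iic (0:ℝ), G s) + ∫ s in (0:ℝ)..x, G s) (G ξ) ξ := by
    have h2 : HasDerivAt (fun x => ∫ s in (0:ℝ)..x, G s) (G ξ) ξ :=
      intervalIntegral.integral_hasDerivAt_right (hGc.intervalIntegrable 0 ξ)
        (hGc.stronglyMeasurableAtFilter _ _) hGc.continuousAt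
    simpa using h2
  exact hder.congr_of_eventuallyEq (Eventually.of_forall fun x => (key x))

lemma hasDerivAt_exp_mul_div {ρ : ℝ} (hρ : ρ ≠ 0) (s : ℝ) :
    HasDerivAt (fun u => Real.exp (ρ * u) / ρ) (Real.exp (ρ * s)) s := by
  have h1 : HasDerivAt (fun u : ℝ => ρ * u) ρ s := by
    simpa using (hasDerivAt_id s).const_mul ρ
  have h2 : HasDerivAt (fun u => Real.exp (ρ * u)) (Real.exp (ρ * s) * ρ) s :=
    (Real.hasDerivAt_exp (ρ * s)).comp s h1
  have := h2.div_const ρ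
  simpa [mul_div_assoc, div_self hρ] using this

/-- `∫ s in Iic x, exp (ρ s) = exp (ρ x) / ρ`. -/
lemma integral_Iic_exp_mul {ρ : ℝ} (hρ : 0 < ρ) (x : ℝ) :
    ∫ s in Iic x, Real.exp (ρ * s) = Real.exp (ρ * x) / ρ := by
  have key : ∀ y : ℝ, ∫ s in y..x, Real.exp (ρ * s)
      = Real.exp (ρ * x) / ρ - Real.exp (ρ * y) / ρ := by
    intro y
    exact intervalIntegral.integral_eq_sub_of_hasDerivAt
      (fun t _ => hasDerivAt_exp_mul_div (ne_of_gt hρ) t)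
      ((Real.continuous_exp.comp (continuous_const.mul continuous_id)).intervalIntegrable y x)
  have h1 : Tendsto (fun y : ℝ => ∫ s in y..x, Real.exp (ρ * s)) atBot
      (𝓝 (∫ s in Iic x, Real.exp (ρ * s))) :=
    MeasureTheory.intervalIntegral_tendsto_integral_Iic x (integrableOn_Iic_exp_mul hρ x)
      tendsto_id
  have h2 : Tendsto (fun y : ℝ => Real.exp (ρ * x) / ρ - Real.exp (ρ * y) / ρ) atBot
      (𝓝 (Real.exp (ρ * x) / ρ - 0 / ρ)) := by
    apply Tendsto.sub tendsto_const_nhds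
    apply Tendsto.div_const
    exact Real.tendsto_exp_atBot.comp (Tendsto.const_mul_atBot hρ tendsto_id)
  simp only [key] at h1
  have := tendsto_nhds_unique h1 h2
  simpa using this

end IntHelpers

section Gfun

lemma add_exp_ge_two (x : ℝ) : 2 ≤ Real.exp x + Real.exp (-x) := by
  rw [Real.exp_neg]
  have h1 := Real.exp_pos x
  have h2 : Real.exp x * (Real.exp x)⁻¹ = 1 := mul_inv_cancel₀ (ne_of_gt h1)
  nlinarith [sq_nonneg (Real.exp x - 1)]

lemma exp_add_exp_neg_ge (x : ℝ) : Real.exp |x| ≤ Real.exp x + Real.exp (-x) := by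
  rcases abs_cases x with ⟨h, _⟩ | ⟨h, _⟩
  · rw [h]; linarith [Real.exp_pos (-x)]
  · rw [h]; linarith [Real.exp_pos x]

lemma gfun_ge (a α l : ℝ) : a ≤ gfun a α l := by
  unfold gfun
  have h1 := add_exp_ge_two (l * delta1 α)
  have h2 := add_exp_ge_two (l * delta2 α)
  have h3 := add_exp_ge_two (l * delta3 α)
  linarith

lemma gfun_continuous (a α : ℝ) : Continuous (gfun a α) := by
  unfold gfun
  fun_prop

lemma convexOn_exp_mul (d : ℝ) : ConvexOn ℝ univ fun l : ℝ => Real.exp (l * d) := by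
  refine ⟨convex_univ, fun x _ y _ p q hp hq hpq => ?_⟩
  have := convexOn_exp.2 (mem_univ (x * d)) (mem_univ (y * d)) hp hq hpq
  simp only [smul_eq_mul] at this ⊢
  calc Real.exp ((p * x + q * y) * d) = Real.exp (p * (x * d) + q * (y * d)) := by ring_nf
  _ ≤ p * Real.exp (x * d) + q * Real.exp (y * d) := this

lemma gfun_convex (a α : ℝ) : ConvexOn ℝ univ (gfun a α) := by
  have hpair : ∀ d : ℝ, ConvexOn ℝ univ
      (fun l : ℝ => Real.exp (l * d) + Real.exp (-(l * d))) := by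
    intro d
    have h2 : (fun l : ℝ => Real.exp (-(l * d))) = fun l : ℝ => Real.exp (l * (-d)) := by
      funext l; ring_nf
    exact (convexOn_exp_mul d).add (h2 ▸ convexOn_exp_mul (-d))
  have hS := (((hpair (delta1 α)).add (hpair (delta2 α))).add (hpair (delta3 α))).smul
    (by norm_num : (0:ℝ) ≤ 1/6)
  have heq : gfun a α = fun l =>
      (1/6 : ℝ) • ((Real.exp (l * delta1 α) + Real.exp (-(l * delta1 α)))
        + (Real.exp (l * delta2 α) + Real.exp (-(l * delta2 α)))
        + (Real.exp (l * delta3 α) + Real.exp (-(l * delta3 α)))) + (a - 1) := by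
    funext l; simp only [gfun, smul_eq_mul]; ring
  rw [heq]
  exact hS.add_const (a - 1)

/-- The key algebraic identity for exponentials. -/
lemma Dh_exp (α lam a ξ : ℝ) :
    (1/6) * Dh α (fun x => Real.exp (lam * x)) ξ + a * Real.exp (lam * ξ)
      = gfun a α lam * Real.exp (lam * ξ) := by
  simp only [Dh, gfun, mul_add, mul_sub, Real.exp_add, Real.exp_sub, Real.exp_neg]
  have e1 := Real.exp_pos (lam * delta1 α)
  have e2 := Real.exp_pos (lam * delta2 α)
  have e3 := Real.exp_pos (lam * delta3 α)
  field_simp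

lemma delta_sq_sum (α : ℝ) :
    (delta1 α)^2 + (delta2 α)^2 + (delta3 α)^2 = 3/2 := by
  simp only [delta1, delta2, delta3]
  have h := Real.sin_sq_add_cos_sq α
  have h3 : Real.sqrt 3 ^ 2 = 3 := Real.sq_sqrt (by norm_num)
  nlinarith

lemma exists_delta_large (α : ℝ) :
    ∃ d : ℝ, (d = delta1 α ∨ d = delta2 α ∨ d = delta3 α) ∧ 1/2 ≤ d^2 := by
  by_contra h
  push_neg at h
  have h1 := h (delta1 α) (Or.inl rfl)
  have h2 := h (delta2 α) (Or.inr (Or.inl rfl))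
  have h3 := h (delta3 α) (Or.inr (Or.inr rfl))
  have := delta_sq_sum α
  linarith

lemma gfun_quad_lb (a α : ℝ) {l : ℝ} (hl : 0 ≤ l) :
    l^2/48 - 1/3 + a ≤ gfun a α l := by
  obtain ⟨d, hd, hd2⟩ := exists_delta_large α
  have key : l^2/8 ≤ Real.exp (l * d) + Real.exp (-(l * d)) := by
    have h1 : Real.exp |l * d| ≤ Real.exp (l * d) + Real.exp (-(l * d)) :=
      exp_add_exp_neg_ge _
    have h2 : (1 + |l * d| / 2)^2 ≤ Real.exp |l * d| := by
      have := Real.add_one_le_exp (|l * d| / 2)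
      have hx : Real.exp (|l * d| / 2) ^ 2 = Real.exp |l * d| := by
        rw [sq, ← Real.exp_add]
        norm_num
      nlinarith [abs_nonneg (l * d), Real.exp_pos (|l * d| / 2)]
    have h3 : (l * d)^2 / 4 ≤ (1 + |l * d| / 2)^2 := by
      have := abs_nonneg (l * d)
      have := sq_abs (l * d)
      nlinarith
    have h4 : l^2 / 8 ≤ (l * d)^2 / 4 := by nlinarith [sq_nonneg l]
    linarith
  unfold gfun
  rcases hd with h | h | h <;> rw [h] at key <;>
    [ (have o1 := add_exp_ge_two (l * delta2 α); have o2 := add_exp_ge_two (l * delta3 α));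
      (have o1 := add_exp_ge_two (l * delta1 α); have o2 := add_exp_ge_two (l * delta3 α));
      (have o1 := add_exp_ge_two (l * delta1 α); have o2 := add_exp_ge_two (l * delta2 α))] <;>
    linarith

lemma cstar_lb (a α : ℝ) (ha : 0 < a) : min (a/8) (1/8) ≤ cstar a α := by
  have hne : {c : ℝ | ∃ l : ℝ, 0 < l ∧ c = gfun a α l / l}.Nonempty :=
    ⟨gfun a α 1 / 1, 1, one_pos, rfl⟩
  apply le_csInf hne
  rintro b ⟨l, hl, rfl⟩
  rcases le_total l 8 with h8 | h8
  · have h1 : a ≤ gfun a α l := gfun_ge a α l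
    have : a / 8 ≤ gfun a α l / l := by
      rw [div_le_div_iff₀ (by norm_num) hl]
      nlinarith
    exact le_trans (min_le_left _ _) this
  · have h1 := gfun_quad_lb a α (le_of_lt hl)
    have : (1:ℝ)/8 ≤ gfun a α l / l := by
      rw [le_div_iff₀ hl]
      nlinarith
    exact le_trans (min_le_right _ _) this

lemma c_pos_of_ge_cstar {a α c : ℝ} (ha : 0 < a) (hc : cstar a α ≤ c) : 0 < c :=
  lt_of_lt_of_le (lt_of_lt_of_le (by positivity) (cstar_lb a α ha)) hc

/-- For `c` strictly above `cstar` there is a root `lam` of `g = c·l` together with a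
point `ν ∈ (lam, (1+θ)lam]` where `g < c·ν`. -/
lemma exists_root_and_slack {a α c θ : ℝ} (ha : 0 < a) (hθ : 0 < θ)
    (h : ∃ μ : ℝ, 0 < μ ∧ gfun a α μ < c * μ) :
    ∃ lam ν : ℝ, 0 < lam ∧ gfun a α lam = c * lam ∧ lam < ν ∧ ν ≤ (1+θ) * lam ∧
      gfun a α ν < c * ν := by
  obtain ⟨μ, hμ, hμlt⟩ := h
  -- root via IVT on [0, μ]
  have hcont : ContinuousOn (fun l => gfun a α l - c * l) (Icc 0 μ) :=
    ((gfun_continuous a α).sub (continuous_const.mul continuous_id)).continuousOn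
  have h0 : gfun a α 0 - c * 0 = a := by
    simp [gfun]
    norm_num
  have hIVT := intermediate_value_Icc' (le_of_lt hμ) hcont (a := (0:ℝ))
  have h0mem : (0:ℝ) ∈ Icc (gfun a α μ - c * μ) (gfun a α 0 - c * 0) := by
    constructor
    · linarith
    · rw [h0]; exact le_of_lt ha
  obtain ⟨lam, hlam_mem, hlam⟩ := hIVT h0mem
  have hlam_root : gfun a α lam = c * lam := by
    have : gfun a α lam - c * lam = 0 := hlam
    linarith
  have hlam_pos : 0 < lam := by
    rcases lt_or_eq_of_le hlam_mem.1 with h | h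
    · exact h
    · exfalso
      have h0' : gfun a α lam - c * lam = a := by rw [← h]; exact h0
      rw [hlam_root, sub_self] at h0'
      linarith
  have hlam_lt_mu : lam < μ := by
    rcases eq_or_lt_of_le hlam_mem.2 with rfl | h
    · exfalso; rw [hlam_root] at hμlt; exact lt_irrefl _ hμlt
    · exact h
  -- pick ν strictly between lam and min μ ((1+θ) lam)
  set ν := min ((lam + μ)/2) ((1+θ) * lam) with hν_def
  have hν1 : lam < ν := by
    apply lt_min
    · linarith
    · nlinarith
  have hν2 : ν < μ := lt_of_le_of_lt (min_le_left _ _) (by linarith)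
  have hν3 : ν ≤ (1+θ) * lam := min_le_right _ _
  -- convexity: gfun at ν is below the chord from lam to μ
  have hconv := (gfun_convex a α).2 (mem_univ lam) (mem_univ μ)
  set p := (μ - ν)/(μ - lam) with hp_def
  set q := (ν - lam)/(μ - lam) with hq_def
  have hμlam : 0 < μ - lam := by linarith
  have hp : 0 ≤ p := by apply div_nonneg <;> linarith
  have hq : 0 < q := by apply div_pos <;> linarith
  have hne : μ - lam ≠ 0 := ne_of_gt hμlam
  have hpq : p + q = 1 := by
    rw [hp_def, hq_def, ← add_div, div_eq_one_iff_eq hne]; ring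
  have hcomb : p * lam + q * μ = ν := by
    rw [hp_def, hq_def]; field_simp; ring
  have := hconv hp (le_of_lt hq) hpq
  simp only [smul_eq_mul, hcomb] at this
  refine ⟨lam, ν, hlam_pos, hlam_root, hν1, hν3, ?_⟩
  calc gfun a α ν ≤ p * gfun a α lam + q * gfun a α μ := this
  _ < p * (c * lam) + q * (c * μ) := by
      rw [hlam_root]
      have : q * gfun a α μ < q * (c * μ) := by
        apply mul_lt_mul_of_pos_left hμlt hq
      linarith
  _ = c * (p * lam + q * μ) := by ring
  _ = c * ν := by rw [hcomb]

end Gfun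

section Ffacts

lemma fisher_bound {f f' : ℝ → ℝ} (hf : FisherKPP f f') :
    ∃ K : ℝ, 0 ≤ K ∧ (∀ s ∈ Icc (0:ℝ) 1, |f' s| ≤ K) ∧
      MonotoneOn (fun s => K * s + f s) (Icc (0:ℝ) 1) ∧
      MonotoneOn (fun s => K * s - f s) (Icc (0:ℝ) 1) := by
  obtain ⟨C, hC⟩ := IsCompact.exists_bound_of_continuousOn isCompact_Icc hf.2.1
  refine ⟨max C 0, le_max_right _ _, ?_, ?_, ?_⟩
  · intro s hs
    exact le_trans (by simpa [Real.norm_eq_abs] using hC s hs) (le_max_left _ _)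
  all_goals {
    apply monotoneOn_of_deriv_nonneg (convex_Icc 0 1)
    · have hfc : ContinuousOn f (Icc (0:ℝ) 1) :=
        fun s hs => ((hf.1 s hs).continuousAt).continuousWithinAt
      fun_prop
    · intro s hs
      rw [interior_Icc] at hs
      have hd : HasDerivAt f (f' s) s := hf.1 s (Ioo_subset_Icc_self hs)
      have h1 : HasDerivAt (fun x : ℝ => max C 0 * x) (max C 0) s := by
        simpa using (hasDerivAt_id s).const_mul (max C 0)
      first
      | exact (h1.add hd).differentiableAt.differentiableWithinAt
      | exact (h1.sub hd).differentiableAt.differentiableWithinAt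
    · intro s hs
      rw [interior_Icc] at hs
      have hd : HasDerivAt f (f' s) s := hf.1 s (Ioo_subset_Icc_self hs)
      have h1 : HasDerivAt (fun x : ℝ => max C 0 * x) (max C 0) s := by
        simpa using (hasDerivAt_id s).const_mul (max C 0)
      have hb : |f' s| ≤ max C 0 :=
        le_trans (by simpa [Real.norm_eq_abs] using hC s (Ioo_subset_Icc_self hs)) (le_max_left _ _)
      rw [abs_le] at hb
      first
      | (rw [show deriv (fun s => max C 0 * s + f s) s = max C 0 + f' s from (h1.add hd).deriv]; linarith [hb.1])
      | (rw [show deriv (fun s => max C 0 * s - f s) s = max C 0 - f' s from (h1.sub hd).deriv]; linarith [hb.2]) }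

lemma fisher_lip {f f' : ℝ → ℝ} (hf : FisherKPP f f') {K : ℝ}
    (hm1 : MonotoneOn (fun s => K * s + f s) (Icc (0:ℝ) 1))
    (hm2 : MonotoneOn (fun s => K * s - f s) (Icc (0:ℝ) 1)) :
    ∀ u ∈ Icc (0:ℝ) 1, ∀ v ∈ Icc (0:ℝ) 1, |f u - f v| ≤ K * |u - v| := by
  have key : ∀ u ∈ Icc (0:ℝ) 1, ∀ v ∈ Icc (0:ℝ) 1, u ≤ v → |f u - f v| ≤ K * |u - v| := by
    intro u hu v hv huv
    have h1 := hm1 hu hv huv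
    have h2 := hm2 hu hv huv
    simp only at h1 h2
    rw [abs_le, abs_of_nonpos (by linarith : u - v ≤ 0)]
    constructor <;> nlinarith
  intro u hu v hv
  rcases le_total u v with h | h
  · exact key u hu v hv h
  · rw [abs_sub_comm, abs_sub_comm u v]; exact key v hv u hu h

lemma fisher_nonneg {f f' : ℝ → ℝ} (hf : FisherKPP f f') :
    ∀ s ∈ Icc (0:ℝ) 1, 0 ≤ f s := by
  intro s hs
  rcases eq_or_lt_of_le hs.1 with h | h1
  · rw [← h, hf.2.2.1]
  rcases eq_or_lt_of_le hs.2 with h | h2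
  · rw [h, hf.2.2.2.1]
  · exact le_of_lt (hf.2.2.2.2.2 s ⟨h1, h2⟩).1

lemma fisher_zero {f f' : ℝ → ℝ} (hf : FisherKPP f f') {L : ℝ}
    (hL : L ∈ Icc (0:ℝ) 1) (h : f L = 0) : L = 0 ∨ L = 1 := by
  rcases eq_or_lt_of_le hL.1 with h1 | h1
  · exact Or.inl h1.symm
  rcases eq_or_lt_of_le hL.2 with h2 | h2
  · exact Or.inr h2
  · exfalso; have := (hf.2.2.2.2.2 L ⟨h1, h2⟩).1; linarith

end Ffacts

section IntSol

/-- Integrated form of the traveling-wave equation. -/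
def IntSol (α : ℝ) (f : ℝ → ℝ) (c : ℝ) (U : ℝ → ℝ) : Prop :=
  ∀ x y : ℝ, c * (U y - U x) = ∫ t in x..y, ((1/6) * Dh α U t + f (U t))

lemma continuous_rhs {α : ℝ} {f : ℝ → ℝ} {U : ℝ → ℝ} (hU : Continuous U)
    (hrange : ∀ ξ, U ξ ∈ Icc (0:ℝ) 1) (hfc : ∀ s ∈ Icc (0:ℝ) 1, ContinuousAt f s) :
    Continuous (fun t => (1/6) * Dh α U t + f (U t)) := by
  have hDh : Continuous (Dh α U) := by
    unfold Dh
    have h : ∀ d : ℝ, Continuous (fun t : ℝ => U (t + d)) :=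
      fun d => hU.comp (continuous_id.add continuous_const)
    have h' : ∀ d : ℝ, Continuous (fun t : ℝ => U (t - d)) :=
      fun d => hU.comp (continuous_id.sub continuous_const)
    exact ((((h _).add (h' _)).add ((h _).add (h' _))).add ((h _).add (h' _))).sub
      (continuous_const.mul hU)
  have hfU : Continuous (fun t => f (U t)) := by
    rw [continuous_iff_continuousAt]
    intro t
    exact (hfc _ (hrange t)).comp hU.continuousAt
  exact (continuous_const.mul hDh).add hfU

lemma intsol_regular {α c : ℝ} {f : ℝ → ℝ} {U : ℝ → ℝ} (hc : c ≠ 0) (hU : Continuous U)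
    (hrange : ∀ ξ, U ξ ∈ Icc (0:ℝ) 1) (hfc : ∀ s ∈ Icc (0:ℝ) 1, ContinuousAt f s)
    (hsol : IntSol α f c U) :
    ContDiff ℝ 1 U ∧ (∀ ξ, c * deriv U ξ = (1/6) * Dh α U ξ + f (U ξ)) := by
  set G := fun t => (1/6) * Dh α U t + f (U t) with hG_def
  have hGc : Continuous G := continuous_rhs hU hrange hfc
  have hUV : U = fun y => U 0 + (1/c) * ∫ t in (0:ℝ)..y, G t := by
    funext y
    have := hsol 0 y
    field_simp
    linarith [hsol 0 y]
  have hud : ∀ ξ, HasDerivAt U (G ξ / c) ξ := by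
    intro ξ
    have h2 : HasDerivAt (fun y => ∫ t in (0:ℝ)..y, G t) (G ξ) ξ :=
      intervalIntegral.integral_hasDerivAt_right (hGc.intervalIntegrable 0 ξ)
        (hGc.stronglyMeasurableAtFilter _ _) hGc.continuousAt
    have h3 : HasDerivAt (fun y => U 0 + (1/c) * ∫ t in (0:ℝ)..y, G t) ((1/c) * G ξ) ξ :=
      ((h2.const_mul (1/c)).const_add (U 0))
    rw [← hUV] at h3
    simpa [div_eq_mul_inv, mul_comm] using h3
  have hderiv : ∀ ξ, deriv U ξ = G ξ / c := fun ξ => (hud ξ).deriv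
  constructor
  · rw [contDiff_one_iff_deriv]
    refine ⟨fun ξ => (hud ξ).differentiableAt, ?_⟩
    have : deriv U = fun ξ => G ξ / c := funext hderiv
    rw [this]
    exact hGc.div_const c
  · intro ξ
    rw [hderiv ξ, hG_def]
    field_simp

lemma intsol_limit_top {α c : ℝ} {f : ℝ → ℝ} {U : ℝ → ℝ} (hc : 0 < c) (hU : Continuous U)
    (hmono : Monotone U) (hrange : ∀ ξ, U ξ ∈ Icc (0:ℝ) 1)
    (hfc : ∀ s ∈ Icc (0:ℝ) 1, ContinuousAt f s)
    (hf0 : ∀ s ∈ Icc (0:ℝ) 1, 0 ≤ f s)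
    (hsol : IntSol α f c U) :
    ∃ L, L ∈ Icc (0:ℝ) 1 ∧ Tendsto U atTop (𝓝 L) ∧ f L = 0 ∧ ∀ ξ, U ξ ≤ L := by
  have hbdd : BddAbove (range U) := ⟨1, by rintro _ ⟨ξ, rfl⟩; exact (hrange ξ).2⟩
  have htend : Tendsto U atTop (𝓝 (⨆ ξ, U ξ)) := tendsto_atTop_ciSup hmono hbdd
  set L := ⨆ ξ, U ξ with hL_def
  have hLmem : L ∈ Icc (0:ℝ) 1 := by
    constructor
    · exact le_trans (hrange 0).1 (le_ciSup hbdd 0)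
    · exact ciSup_le fun ξ => (hrange ξ).2
  refine ⟨L, hLmem, htend, ?_, fun ξ => le_ciSup hbdd ξ⟩
  by_contra hfL
  have hκ : 0 < f L := lt_of_le_of_ne (hf0 L hLmem) (Ne.symm hfL)
  set κ := f L with hκ_def
  set G := fun t => (1/6) * Dh α U t + f (U t) with hG_def
  have hGc : Continuous G := continuous_rhs hU hrange hfc
  -- G tends to f L = κ at +∞
  have hshift : ∀ d : ℝ, Tendsto (fun t => U (t + d)) atTop (𝓝 L) :=
    fun d => htend.comp (tendsto_atTop_add_const_right atTop d tendsto_id)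
  have hshift' : ∀ d : ℝ, Tendsto (fun t => U (t - d)) atTop (𝓝 L) := by
    intro d
    simpa [sub_eq_add_neg] using hshift (-d)
  have hDh : Tendsto (fun t => Dh α U t) atTop (𝓝 0) := by
    have h6 : Tendsto (fun t => 6 * U t) atTop (𝓝 (6 * L)) :=
      (htend.const_mul 6)
    have := ((((hshift (delta1 α)).add (hshift' (delta1 α))).add
      ((hshift (delta2 α)).add (hshift' (delta2 α)))).add
      ((hshift (delta3 α)).add (hshift' (delta3 α)))).sub h6
    have heq : L + L + (L + L) + (L + L) - 6 * L = 0 := by ring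
    rw [heq] at this
    exact this
  have hfU : Tendsto (fun t => f (U t)) atTop (𝓝 κ) :=
    ((hfc L hLmem).tendsto).comp htend
  have hGtend : Tendsto G atTop (𝓝 κ) := by
    rw [hG_def]
    have := (hDh.const_mul (1/6 : ℝ)).add hfU
    simpa using this
  obtain ⟨M, hM⟩ := eventually_atTop.1 (hGtend (Ioi_mem_nhds (half_lt_self hκ)))
  obtain ⟨y, hy_def⟩ : ∃ y : ℝ, y = M + 2 * (c + 1) / κ := ⟨_, rfl⟩
  have hMy : M ≤ y := by
    have : 0 ≤ 2 * (c + 1) / κ := by positivity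
    linarith
  have hint : (y - M) • (κ/2) ≤ ∫ t in M..y, G t := by
    rw [← intervalIntegral.integral_const]
    apply intervalIntegral.integral_mono_on hMy (intervalIntegrable_const)
      (hGc.intervalIntegrable M y)
    intro t ht
    exact le_of_lt (hM t ht.1)
  have heq : c * (U y - U M) = ∫ t in M..y, G t := hsol M y
  have harith : (y - M) • (κ/2) = c + 1 := by
    rw [smul_eq_mul, hy_def]
    field_simp
    try ring
  have hub : c * (U y - U M) ≤ c := by
    have h1 := (hrange y).2
    have h2 := (hrange M).1
    nlinarith
  rw [harith] at hint
  linarith [heq ▸ hint]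

lemma intsol_limit_bot {α c : ℝ} {f : ℝ → ℝ} {U : ℝ → ℝ} (hc : 0 < c) (hU : Continuous U)
    (hmono : Monotone U) (hrange : ∀ ξ, U ξ ∈ Icc (0:ℝ) 1)
    (hfc : ∀ s ∈ Icc (0:ℝ) 1, ContinuousAt f s)
    (hf0 : ∀ s ∈ Icc (0:ℝ) 1, 0 ≤ f s)
    (hsol : IntSol α f c U) :
    ∃ L, L ∈ Icc (0:ℝ) 1 ∧ Tendsto U atBot (𝓝 L) ∧ f L = 0 ∧ ∀ ξ, L ≤ U ξ := by
  have hbdd : BddBelow (range U) := ⟨0, by rintro _ ⟨ξ, rfl⟩; exact (hrange ξ).1⟩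
  have htend : Tendsto U atBot (𝓝 (⨅ ξ, U ξ)) := tendsto_atBot_ciInf hmono hbdd
  set L := ⨅ ξ, U ξ with hL_def
  have hLmem : L ∈ Icc (0:ℝ) 1 := by
    constructor
    · exact le_ciInf fun ξ => (hrange ξ).1
    · exact le_trans (ciInf_le hbdd 0) (hrange 0).2
  refine ⟨L, hLmem, htend, ?_, fun ξ => ciInf_le hbdd ξ⟩
  by_contra hfL
  have hκ : 0 < f L := lt_of_le_of_ne (hf0 L hLmem) (Ne.symm hfL)
  set κ := f L with hκ_def
  set G := fun t => (1/6) * Dh α U t + f (U t) with hG_def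
  have hGc : Continuous G := continuous_rhs hU hrange hfc
  have hshift : ∀ d : ℝ, Tendsto (fun t => U (t + d)) atBot (𝓝 L) :=
    fun d => htend.comp (tendsto_atBot_add_const_right atBot d tendsto_id)
  have hshift' : ∀ d : ℝ, Tendsto (fun t => U (t - d)) atBot (𝓝 L) := by
    intro d
    simpa [sub_eq_add_neg] using hshift (-d)
  have hDh : Tendsto (fun t => Dh α U t) atBot (𝓝 0) := by
    have h6 : Tendsto (fun t => 6 * U t) atBot (𝓝 (6 * L)) := (htend.const_mul 6)
    have := ((((hshift (delta1 α)).add (hshift' (delta1 α))).add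
      ((hshift (delta2 α)).add (hshift' (delta2 α)))).add
      ((hshift (delta3 α)).add (hshift' (delta3 α)))).sub h6
    have heq : L + L + (L + L) + (L + L) - 6 * L = 0 := by ring
    rw [heq] at this
    exact this
  have hfU : Tendsto (fun t => f (U t)) atBot (𝓝 κ) := ((hfc L hLmem).tendsto).comp htend
  have hGtend : Tendsto G atBot (𝓝 κ) := by
    rw [hG_def]
    have := (hDh.const_mul (1/6 : ℝ)).add hfU
    simpa using this
  obtain ⟨M, hM⟩ := eventually_atBot.1 (hGtend (Ioi_mem_nhds (half_lt_self hκ)))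
  obtain ⟨x, hx_def⟩ : ∃ x : ℝ, x = M - 2 * (c + 1) / κ := ⟨_, rfl⟩
  have hMx : x ≤ M := by
    have : 0 ≤ 2 * (c + 1) / κ := by positivity
    linarith
  have hint : (M - x) • (κ/2) ≤ ∫ t in x..M, G t := by
    rw [← intervalIntegral.integral_const]
    apply intervalIntegral.integral_mono_on hMx (intervalIntegrable_const)
      (hGc.intervalIntegrable x M)
    intro t ht
    exact le_of_lt (hM t ht.2)
  have heq : c * (U M - U x) = ∫ t in x..M, G t := hsol x M
  have harith : (M - x) • (κ/2) = c + 1 := by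
    rw [smul_eq_mul, hx_def]
    field_simp
    try ring
  have hub : c * (U M - U x) ≤ c := by
    have h1 := (hrange M).2
    have h2 := (hrange x).1
    nlinarith
  rw [harith] at hint
  linarith [heq ▸ hint]

end IntSol

section Operator

/-- The monotone nonlinearity `H[V] = (1/6)ΣV(ξ±δ) + K V + f(V)`. -/
noncomputable def Hop (α K : ℝ) (f : ℝ → ℝ) (V : ℝ → ℝ) (ξ : ℝ) : ℝ :=
  (1/6) * ((V (ξ + delta1 α) + V (ξ - delta1 α)) + (V (ξ + delta2 α) + V (ξ - delta2 α))
    + (V (ξ + delta3 α) + V (ξ - delta3 α))) + (K * V ξ + f (V ξ))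

lemma Hop_eq (α K : ℝ) (f V : ℝ → ℝ) (ξ : ℝ) :
    Hop α K f V ξ = (1/6) * Dh α V ξ + f (V ξ) + (K + 1) * V ξ := by
  simp only [Hop, Dh]; ring

lemma Hop_cont {α K : ℝ} {f V : ℝ → ℝ} (hV : Continuous V)
    (hrange : ∀ ξ, V ξ ∈ Icc (0:ℝ) 1) (hfc : ∀ s ∈ Icc (0:ℝ) 1, ContinuousAt f s) :
    Continuous (Hop α K f V) := by
  have h : ∀ d : ℝ, Continuous (fun t : ℝ => V (t + d)) :=
    fun d => hV.comp (continuous_id.add continuous_const)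
  have h' : ∀ d : ℝ, Continuous (fun t : ℝ => V (t - d)) :=
    fun d => hV.comp (continuous_id.sub continuous_const)
  have hfU : Continuous (fun t => f (V t)) := by
    rw [continuous_iff_continuousAt]
    exact fun t => (hfc _ (hrange t)).comp hV.continuousAt
  exact (continuous_const.mul ((((h _).add (h' _)).add ((h _).add (h' _))).add
    ((h _).add (h' _)))).add ((continuous_const.mul hV).add hfU)

lemma Hop_le_Hop {α K : ℝ} {f V W : ℝ → ℝ}
    (hm1 : MonotoneOn (fun s => K * s + f s) (Icc (0:ℝ) 1))
    (hVr : ∀ ξ, V ξ ∈ Icc (0:ℝ) 1) (hWr : ∀ ξ, W ξ ∈ Icc (0:ℝ) 1)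
    (hVW : ∀ ξ, V ξ ≤ W ξ) (ξ : ℝ) : Hop α K f V ξ ≤ Hop α K f W ξ := by
  unfold Hop
  have h1 := hm1 (hVr ξ) (hWr ξ) (hVW ξ)
  simp only at h1
  have := hVW (ξ + delta1 α); have := hVW (ξ - delta1 α)
  have := hVW (ξ + delta2 α); have := hVW (ξ - delta2 α)
  have := hVW (ξ + delta3 α); have := hVW (ξ - delta3 α)
  linarith

lemma Hop_nonneg {α K : ℝ} {f V : ℝ → ℝ} (hf0 : f 0 = 0)
    (hm1 : MonotoneOn (fun s => K * s + f s) (Icc (0:ℝ) 1))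
    (hVr : ∀ ξ, V ξ ∈ Icc (0:ℝ) 1) (ξ : ℝ) : 0 ≤ Hop α K f V ξ := by
  unfold Hop
  have h1 := hm1 (left_mem_Icc.2 zero_le_one) (hVr ξ) (hVr ξ).1
  simp only [mul_zero, hf0, add_zero] at h1
  have := (hVr (ξ + delta1 α)).1; have := (hVr (ξ - delta1 α)).1
  have := (hVr (ξ + delta2 α)).1; have := (hVr (ξ - delta2 α)).1
  have := (hVr (ξ + delta3 α)).1; have := (hVr (ξ - delta3 α)).1
  linarith

lemma Hop_le_bound {α K : ℝ} {f V : ℝ → ℝ} (hf1 : f 1 = 0)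
    (hm1 : MonotoneOn (fun s => K * s + f s) (Icc (0:ℝ) 1))
    (hVr : ∀ ξ, V ξ ∈ Icc (0:ℝ) 1) (ξ : ℝ) : Hop α K f V ξ ≤ K + 1 := by
  unfold Hop
  have h1 := hm1 (hVr ξ) (right_mem_Icc.2 zero_le_one) (hVr ξ).2
  simp only [mul_one, hf1, add_zero] at h1
  have := (hVr (ξ + delta1 α)).2; have := (hVr (ξ - delta1 α)).2
  have := (hVr (ξ + delta2 α)).2; have := (hVr (ξ - delta2 α)).2
  have := (hVr (ξ + delta3 α)).2; have := (hVr (ξ - delta3 α)).2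
  linarith

lemma Hop_mono {α K : ℝ} {f V : ℝ → ℝ}
    (hm1 : MonotoneOn (fun s => K * s + f s) (Icc (0:ℝ) 1))
    (hVr : ∀ ξ, V ξ ∈ Icc (0:ℝ) 1) (hVm : Monotone V) :
    Monotone (Hop α K f V) := by
  intro x y hxy
  unfold Hop
  have h1 := hm1 (hVr x) (hVr y) (hVm hxy)
  simp only at h1
  have h2 : ∀ d : ℝ, V (x + d) ≤ V (y + d) := fun d => hVm (by linarith)
  have h3 : ∀ d : ℝ, V (x - d) ≤ V (y - d) := fun d => hVm (by linarith)
  have := h2 (delta1 α); have := h3 (delta1 α)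
  have := h2 (delta2 α); have := h3 (delta2 α)
  have := h2 (delta3 α); have := h3 (delta3 α)
  linarith

/-- The fixed point operator. -/
noncomputable def Tmap (α K : ℝ) (f : ℝ → ℝ) (c : ℝ) (V : ℝ → ℝ) (ξ : ℝ) : ℝ :=
  (1/c) * (Real.exp (-((K+1)/c * ξ)) * ∫ s in Iic ξ, Real.exp ((K+1)/c * s) * Hop α K f V s)

end Operator

section OperatorFacts

variable {α K c : ℝ} {f f' V : ℝ → ℝ}

/-- Standing assumptions for the operator lemmas. -/
structure OpData (α K c : ℝ) (f f' : ℝ → ℝ) : Prop where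
  hc : 0 < c
  hK : 0 ≤ K
  hf : FisherKPP f f'
  hm1 : MonotoneOn (fun s => K * s + f s) (Icc (0:ℝ) 1)
  hm2 : MonotoneOn (fun s => K * s - f s) (Icc (0:ℝ) 1)

namespace OpData

lemma hρ (D : OpData α K c f f') : 0 < (K+1)/c := div_pos (by linarith [D.hK]) D.hc

lemma hfc (D : OpData α K c f f') : ∀ s ∈ Icc (0:ℝ) 1, ContinuousAt f s :=
  fun s hs => (D.hf.1 s hs).continuousAt

lemma Hbd (D : OpData α K c f f') {V : ℝ → ℝ} (hVr : ∀ ξ, V ξ ∈ Icc (0:ℝ) 1) (ξ : ℝ) :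
    |Hop α K f V ξ| ≤ K + 1 := by
  rw [abs_le]
  exact ⟨by linarith [Hop_nonneg (α := α) D.hf.2.2.1 D.hm1 hVr ξ, D.hK],
    Hop_le_bound D.hf.2.2.2.1 D.hm1 hVr ξ⟩

lemma integrand_integrable (D : OpData α K c f f') {V : ℝ → ℝ} (hV : Continuous V)
    (hVr : ∀ ξ, V ξ ∈ Icc (0:ℝ) 1) (x : ℝ) :
    IntegrableOn (fun s => Real.exp ((K+1)/c * s) * Hop α K f V s) (Iic x) :=
  integrableOn_Iic_exp_mul_bdd D.hρ (Hop_cont hV hVr D.hfc) (D.Hbd hVr) x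

/-- Derivative of `Tmap`. -/
lemma Tmap_hasDeriv (D : OpData α K c f f') {V : ℝ → ℝ} (hV : Continuous V) (hVr : ∀ ξ, V ξ ∈ Icc (0:ℝ) 1) (ξ : ℝ) :
    HasDerivAt (Tmap α K f c V)
      ((1/c) * (Hop α K f V ξ - (K+1) * Tmap α K f c V ξ)) ξ := by
  set ρ := (K+1)/c with hρ_def
  have hGc : Continuous (fun s => Real.exp (ρ * s) * Hop α K f V s) :=
    (Real.continuous_exp.comp (continuous_const.mul continuous_id)).mul
      (Hop_cont hV hVr D.hfc)
  have hJ : HasDerivAt (fun x => ∫ s in Iic x, Real.exp (ρ * s) * Hop α K f V s)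
      (Real.exp (ρ * ξ) * Hop α K f V ξ) ξ :=
    hasDerivAt_integral_Iic hGc (fun x => D.integrand_integrable hV hVr x) ξ
  have hE : HasDerivAt (fun x : ℝ => Real.exp (-(ρ * x))) (-ρ * Real.exp (-(ρ * ξ))) ξ := by
    have h1 : HasDerivAt (fun x : ℝ => -(ρ * x)) (-ρ) ξ := by
      have h0 := ((hasDerivAt_id ξ).const_mul ρ).neg
      simp at h0
      exact h0
    exact ((Real.hasDerivAt_exp (-(ρ * ξ))).comp ξ h1).congr_deriv
      (show Real.exp (-(ρ * ξ)) * -ρ = -ρ * Real.exp (-(ρ * ξ)) by ring)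
  have hprod := hE.mul hJ
  have hfull := hprod.const_mul (1/c)
  have heq : Tmap α K f c V = fun x => (1/c) * (Real.exp (-(ρ * x)) *
      ∫ s in Iic x, Real.exp (ρ * s) * Hop α K f V s) := by
    funext x; rfl
  rw [heq]
  refine hfull.congr_deriv ?_
  symm
  have hexp : Real.exp (-(ρ * ξ)) * Real.exp (ρ * ξ) = 1 := by
    rw [← Real.exp_add]; simp
  have hβ : (fun x => (1/c) * (Real.exp (-(ρ * x)) *
      ∫ s in Iic x, Real.exp (ρ * s) * Hop α K f V s)) ξ
      = (1/c) * (Real.exp (-(ρ * ξ)) *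
      ∫ s in Iic ξ, Real.exp (ρ * s) * Hop α K f V s) := rfl
  rw [← mul_assoc (Real.exp (-(ρ * ξ))), hexp, one_mul, hβ, hρ_def]
  have hcne : c ≠ 0 := ne_of_gt D.hc
  field_simp
  ring

lemma Tmap_nonneg (D : OpData α K c f f') {V : ℝ → ℝ} (hV : Continuous V) (hVr : ∀ ξ, V ξ ∈ Icc (0:ℝ) 1) (ξ : ℝ) :
    0 ≤ Tmap α K f c V ξ := by
  unfold Tmap
  have h1 : 0 ≤ ∫ s in Iic ξ, Real.exp ((K+1)/c * s) * Hop α K f V s :=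
    setIntegral_nonneg measurableSet_Iic fun s _ =>
      mul_nonneg (le_of_lt (Real.exp_pos _)) (Hop_nonneg (α := α) D.hf.2.2.1 D.hm1 hVr s)
  exact mul_nonneg (one_div_nonneg.2 D.hc.le) (mul_nonneg (Real.exp_pos _).le h1)

lemma Tmap_le_one (D : OpData α K c f f') {V : ℝ → ℝ} (hV : Continuous V) (hVr : ∀ ξ, V ξ ∈ Icc (0:ℝ) 1) (ξ : ℝ) :
    Tmap α K f c V ξ ≤ 1 := by
  set ρ := (K+1)/c with hρ_def
  have h1 : ∫ s in Iic ξ, Real.exp (ρ * s) * Hop α K f V s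
      ≤ ∫ s in Iic ξ, Real.exp (ρ * s) * (K + 1) := by
    apply setIntegral_mono_on (D.integrand_integrable hV hVr ξ)
      ((integrableOn_Iic_exp_mul D.hρ ξ).mul_const (K+1)) measurableSet_Iic
    intro s _
    have hhb := Hop_le_bound (α := α) D.hf.2.2.2.1 D.hm1 hVr s
    nlinarith [Real.exp_pos (ρ * s)]
  have h2 : ∫ s in Iic ξ, Real.exp (ρ * s) * (K + 1)
      = Real.exp (ρ * ξ) / ρ * (K + 1) := by
    rw [MeasureTheory.integral_mul_const, integral_Iic_exp_mul D.hρ]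
  rw [h2] at h1
  have hexp : Real.exp (-(ρ * ξ)) * Real.exp (ρ * ξ) = 1 := by
    rw [← Real.exp_add]; simp
  have hTmap : Tmap α K f c V ξ = (1/c) * (Real.exp (-(ρ * ξ)) *
      ∫ s in Iic ξ, Real.exp (ρ * s) * Hop α K f V s) := rfl
  rw [hTmap]
  have he1 : (0:ℝ) < Real.exp (-(ρ * ξ)) := Real.exp_pos _
  have hcne : 0 < c := D.hc
  have hρ0 : 0 < ρ := by rw [hρ_def]; exact D.hρ
  calc (1/c) * (Real.exp (-(ρ * ξ)) * ∫ s in Iic ξ, Real.exp (ρ * s) * Hop α K f V s)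
      ≤ (1/c) * (Real.exp (-(ρ * ξ)) * (Real.exp (ρ * ξ) / ρ * (K + 1))) := by
        apply mul_le_mul_of_nonneg_left (mul_le_mul_of_nonneg_left h1 he1.le) (by positivity)
  _ = 1 := by
      rw [show Real.exp (-(ρ * ξ)) * (Real.exp (ρ * ξ) / ρ * (K + 1))
          = (Real.exp (-(ρ * ξ)) * Real.exp (ρ * ξ)) * ((K+1)/ρ) by ring, hexp, one_mul,
        hρ_def]
      have h1 : (0:ℝ) < K + 1 := by linarith [D.hK]
      have hcne : c ≠ 0 := ne_of_gt D.hc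
      field_simp [ne_of_gt h1]

end OpData

end OperatorFacts

namespace OpData

variable {α K c : ℝ} {f f' : ℝ → ℝ}

lemma Tmap_shift_form (D : OpData α K c f f') {V : ℝ → ℝ} (hV : Continuous V)
    (hVr : ∀ ξ, V ξ ∈ Icc (0:ℝ) 1) (ξ : ℝ) :
    Tmap α K f c V ξ
      = (1/c) * ∫ u in Iic (0:ℝ), Real.exp ((K+1)/c * u) * Hop α K f V (u + ξ) := by
  set ρ := (K+1)/c with hρ_def
  unfold Tmap
  rw [integral_Iic_comp_add (fun s => Real.exp (ρ * s) * Hop α K f V s) ξ]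
  simp only [mul_add, Real.exp_add]
  have hswap : ∀ u : ℝ, Real.exp (ρ * u) * Real.exp (ρ * ξ) * Hop α K f V (u + ξ)
      = Real.exp (ρ * ξ) * (Real.exp (ρ * u) * Hop α K f V (u + ξ)) := fun u => by ring
  simp only [hswap]
  rw [MeasureTheory.integral_const_mul]
  rw [show Real.exp (-(ρ * ξ)) * (Real.exp (ρ * ξ) *
      ∫ u in Iic (0:ℝ), Real.exp (ρ * u) * Hop α K f V (u + ξ))
    = (Real.exp (-(ρ * ξ)) * Real.exp (ρ * ξ)) *
      ∫ u in Iic (0:ℝ), Real.exp (ρ * u) * Hop α K f V (u + ξ) from by ring,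
    ← Real.exp_add]
  simp

lemma integrand_integrable_shift (D : OpData α K c f f') {V : ℝ → ℝ} (hV : Continuous V)
    (hVr : ∀ ξ, V ξ ∈ Icc (0:ℝ) 1) (x : ℝ) :
    IntegrableOn (fun u => Real.exp ((K+1)/c * u) * Hop α K f V (u + x)) (Iic (0:ℝ)) := by
  apply integrableOn_Iic_exp_mul_bdd D.hρ
    ((Hop_cont hV hVr D.hfc).comp (continuous_id.add continuous_const))
  exact fun u => D.Hbd hVr (u + x)

lemma Tmap_monotone (D : OpData α K c f f') {V : ℝ → ℝ} (hV : Continuous V)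
    (hVr : ∀ ξ, V ξ ∈ Icc (0:ℝ) 1) (hVm : Monotone V) :
    Monotone (Tmap α K f c V) := by
  intro x y hxy
  rw [Tmap_shift_form D hV hVr, Tmap_shift_form D hV hVr]
  apply mul_le_mul_of_nonneg_left _ (one_div_nonneg.2 D.hc.le)
  apply setIntegral_mono_on (D.integrand_integrable_shift hV hVr x)
    (D.integrand_integrable_shift hV hVr y) measurableSet_Iic
  intro u _
  exact mul_le_mul_of_nonneg_left
    (Hop_mono D.hm1 hVr hVm (by linarith : u + x ≤ u + y)) (Real.exp_pos _).le

lemma Tmap_le_Tmap (D : OpData α K c f f') {V W : ℝ → ℝ} (hV : Continuous V)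
    (hW : Continuous W) (hVr : ∀ ξ, V ξ ∈ Icc (0:ℝ) 1) (hWr : ∀ ξ, W ξ ∈ Icc (0:ℝ) 1)
    (hVW : ∀ ξ, V ξ ≤ W ξ) (ξ : ℝ) : Tmap α K f c V ξ ≤ Tmap α K f c W ξ := by
  unfold Tmap
  apply mul_le_mul_of_nonneg_left _ (one_div_nonneg.2 D.hc.le)
  apply mul_le_mul_of_nonneg_left _ (Real.exp_pos _).le
  apply setIntegral_mono_on (D.integrand_integrable hV hVr ξ)
    (D.integrand_integrable hW hWr ξ) measurableSet_Iic
  intro s _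
  exact mul_le_mul_of_nonneg_left (Hop_le_Hop D.hm1 hVr hWr hVW s) (Real.exp_pos _).le

lemma Tmap_cont (D : OpData α K c f f') {V : ℝ → ℝ} (hV : Continuous V)
    (hVr : ∀ ξ, V ξ ∈ Icc (0:ℝ) 1) : Continuous (Tmap α K f c V) := by
  rw [continuous_iff_continuousAt]
  exact fun ξ => (D.Tmap_hasDeriv hV hVr ξ).continuousAt

lemma Tmap_range (D : OpData α K c f f') {V : ℝ → ℝ} (hV : Continuous V)
    (hVr : ∀ ξ, V ξ ∈ Icc (0:ℝ) 1) (ξ : ℝ) : Tmap α K f c V ξ ∈ Icc (0:ℝ) 1 :=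
  ⟨D.Tmap_nonneg hV hVr ξ, D.Tmap_le_one hV hVr ξ⟩

lemma Tmap_lip (D : OpData α K c f f') {V : ℝ → ℝ} (hV : Continuous V)
    (hVr : ∀ ξ, V ξ ∈ Icc (0:ℝ) 1) (s t : ℝ) :
    |Tmap α K f c V s - Tmap α K f c V t| ≤ (2 * (K+1) / c) * |s - t| := by
  apply lips_of_deriv
  intro u
  refine ⟨_, D.Tmap_hasDeriv hV hVr u, ?_⟩
  have h1 := D.Hbd hVr u
  have h2 := D.Tmap_range hV hVr u
  rw [abs_le] at h1 ⊢
  have hc := D.hc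
  have hK := D.hK
  have hinv : (0:ℝ) ≤ 1/c := one_div_nonneg.2 hc.le
  constructor
  · have hX : -(2*(K+1)) ≤ Hop α K f V u - (K+1) * Tmap α K f c V u := by
      nlinarith [h2.1, h2.2, h1.1]
    calc -(2*(K+1)/c) = (1/c) * (-(2*(K+1))) := by ring
    _ ≤ (1/c) * (Hop α K f V u - (K+1) * Tmap α K f c V u) :=
        mul_le_mul_of_nonneg_left hX hinv
  · have hX : Hop α K f V u - (K+1) * Tmap α K f c V u ≤ 2*(K+1) := by
      nlinarith [h2.1, h2.2, h1.2]
    calc (1/c) * (Hop α K f V u - (K+1) * Tmap α K f c V u)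
        ≤ (1/c) * (2*(K+1)) := mul_le_mul_of_nonneg_left hX hinv
    _ = 2*(K+1)/c := by ring

lemma Tmap_rel (D : OpData α K c f f') {V : ℝ → ℝ} (hV : Continuous V)
    (hVr : ∀ ξ, V ξ ∈ Icc (0:ℝ) 1) (x y : ℝ) :
    c * (Tmap α K f c V y - Tmap α K f c V x)
      = ∫ t in x..y, (Hop α K f V t - (K+1) * Tmap α K f c V t) := by
  have hint : Continuous (fun t => (1/c) * (Hop α K f V t - (K+1) * Tmap α K f c V t)) :=
    continuous_const.mul ((Hop_cont hV hVr D.hfc).sub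
      (continuous_const.mul (D.Tmap_cont hV hVr)))
  have h1 := intervalIntegral.integral_eq_sub_of_hasDerivAt
    (f := Tmap α K f c V) (fun t _ => D.Tmap_hasDeriv hV hVr t)
    (hint.intervalIntegrable x y)
  rw [intervalIntegral.integral_const_mul] at h1
  have hc : c ≠ 0 := ne_of_gt D.hc
  field_simp at h1
  linarith [h1]

lemma exp_phi_tendsto_zero (D : OpData α K c f f') {φ : ℝ → ℝ}
    (hφr : ∀ ξ, φ ξ ∈ Icc (0:ℝ) 1) :
    Tendsto (fun x => Real.exp ((K+1)/c * x) * φ x) atBot (𝓝 0) := by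
  have hexp : Tendsto (fun x : ℝ => Real.exp ((K+1)/c * x)) atBot (𝓝 0) :=
    Real.tendsto_exp_atBot.comp (Tendsto.const_mul_atBot D.hρ tendsto_id)
  apply tendsto_of_tendsto_of_tendsto_of_le_of_le tendsto_const_nhds hexp
  · exact fun x => mul_nonneg (Real.exp_pos _).le (hφr x).1
  · exact fun x => by nlinarith [(hφr x).2, Real.exp_pos ((K+1)/c * x), (hφr x).1]

lemma J_tendsto_zero (D : OpData α K c f f') {φ : ℝ → ℝ} (hφc : Continuous φ)
    (hφr : ∀ ξ, φ ξ ∈ Icc (0:ℝ) 1) :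
    Tendsto (fun x => ∫ s in Iic x, Real.exp ((K+1)/c * s) * Hop α K f φ s) atBot (𝓝 0) := by
  set ρ := (K+1)/c with hρ_def
  have hub : ∀ x : ℝ, (∫ s in Iic x, Real.exp (ρ * s) * Hop α K f φ s)
      ≤ Real.exp (ρ * x) / ρ * (K+1) := by
    intro x
    have h1 : ∫ s in Iic x, Real.exp (ρ * s) * Hop α K f φ s
        ≤ ∫ s in Iic x, Real.exp (ρ * s) * (K + 1) := by
      apply setIntegral_mono_on (D.integrand_integrable hφc hφr x)
        ((integrableOn_Iic_exp_mul D.hρ x).mul_const (K+1)) measurableSet_Iic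
      intro s _
      have hhb := Hop_le_bound (α := α) D.hf.2.2.2.1 D.hm1 hφr s
      nlinarith [Real.exp_pos (ρ * s)]
    rwa [MeasureTheory.integral_mul_const, integral_Iic_exp_mul D.hρ] at h1
  have hlb : ∀ x : ℝ, 0 ≤ ∫ s in Iic x, Real.exp (ρ * s) * Hop α K f φ s := fun x =>
    setIntegral_nonneg measurableSet_Iic fun s _ =>
      mul_nonneg (Real.exp_pos _).le (Hop_nonneg (α := α) D.hf.2.2.1 D.hm1 hφr s)
  have hexp : Tendsto (fun x : ℝ => Real.exp (ρ * x) / ρ * (K+1)) atBot (𝓝 (0 / ρ * (K+1))) := by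
    apply Tendsto.mul_const
    apply Tendsto.div_const
    exact Real.tendsto_exp_atBot.comp (Tendsto.const_mul_atBot D.hρ tendsto_id)
  rw [show (0:ℝ) / ρ * (K+1) = 0 by ring] at hexp
  exact tendsto_of_tendsto_of_tendsto_of_le_of_le tendsto_const_nhds hexp hlb hub

/-- Supersolution comparison: if `c φ' ≥ H[φ] - (K+1)φ` off one point, then `Tφ ≤ φ`. -/
lemma Tmap_le_of_supersol (D : OpData α K c f f') {φ : ℝ → ℝ} (hφc : Continuous φ)
    (hφr : ∀ ξ, φ ξ ∈ Icc (0:ℝ) 1) (p : ℝ)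
    (hd : ∀ ξ, ξ ≠ p → ∃ d, HasDerivAt φ d ξ ∧ Hop α K f φ ξ - (K+1) * φ ξ ≤ c * d) :
    ∀ ξ, Tmap α K f c φ ξ ≤ φ ξ := by
  intro ξ
  set ρ := (K+1)/c with hρ_def
  have hρc : ρ * c = K + 1 := by rw [hρ_def]; exact div_mul_cancel₀ _ (ne_of_gt D.hc)
  set J := fun x => ∫ s in Iic x, Real.exp (ρ * s) * Hop α K f φ s with hJ_def
  have hJd : ∀ x, HasDerivAt J (Real.exp (ρ * x) * Hop α K f φ x) x :=
    hasDerivAt_integral_Iic ((Real.continuous_exp.comp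
      (continuous_const.mul continuous_id)).mul (Hop_cont hφc hφr D.hfc))
      (fun x => D.integrand_integrable hφc hφr x)
  have hJc : Continuous J := by
    rw [continuous_iff_continuousAt]; exact fun x => (hJd x).continuousAt
  set ψ := fun s => Real.exp (ρ * s) * φ s - (1/c) * J s with hψ_def
  have hψc : Continuous ψ :=
    ((Real.continuous_exp.comp (continuous_const.mul continuous_id)).mul hφc).sub
      (continuous_const.mul hJc)
  have hψmono : ∀ x, x ≤ ξ → ψ x ≤ ψ ξ := by
    intro x hx
    apply mono_piece_exc (p := p) hx hψc
    intro t _ htp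
    obtain ⟨d, hdd, hineq⟩ := hd t htp
    have hE : HasDerivAt (fun s : ℝ => Real.exp (ρ * s)) (ρ * Real.exp (ρ * t)) t := by
      have h1 : HasDerivAt (fun s : ℝ => ρ * s) ρ t := by
        simpa using (hasDerivAt_id t).const_mul ρ
      rw [mul_comm ρ (Real.exp (ρ * t))]
      exact HasDerivAt.comp t (Real.hasDerivAt_exp (ρ * t)) h1
    refine ⟨_, (hE.mul hdd).sub ((hJd t).const_mul (1/c)), ?_⟩
    have hep := Real.exp_pos (ρ * t)
    have hc := D.hc
    have hφt := hφr t
    rw [show ρ * Real.exp (ρ * t) * φ t + Real.exp (ρ * t) * d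
        - (1/c) * (Real.exp (ρ * t) * Hop α K f φ t)
      = (Real.exp (ρ * t) / c) * ((ρ * c) * φ t + c * d - Hop α K f φ t) from by field_simp]
    apply mul_nonneg (by positivity)
    rw [hρc]
    linarith
  have hψlim : Tendsto ψ atBot (𝓝 0) := by
    have := (D.exp_phi_tendsto_zero hφr).sub ((D.J_tendsto_zero hφc hφr).const_mul (1/c))
    rw [hψ_def, hJ_def]
    simpa using this
  have hψξ : 0 ≤ ψ ξ :=
    le_of_tendsto hψlim (eventually_atBot.2 ⟨ξ, hψmono⟩)
  have hkey : (1/c) * J ξ ≤ Real.exp (ρ * ξ) * φ ξ := by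
    rw [hψ_def] at hψξ; simpa using hψξ
  have hTmap : Tmap α K f c φ ξ = (1/c) * (Real.exp (-(ρ * ξ)) * J ξ) := rfl
  rw [hTmap]
  have hexp : Real.exp (-(ρ * ξ)) * Real.exp (ρ * ξ) = 1 := by
    rw [← Real.exp_add]; simp
  have he := Real.exp_pos (-(ρ * ξ))
  have hc := D.hc
  calc (1/c) * (Real.exp (-(ρ * ξ)) * J ξ) = Real.exp (-(ρ * ξ)) * ((1/c) * J ξ) := by ring
  _ ≤ Real.exp (-(ρ * ξ)) * (Real.exp (ρ * ξ) * φ ξ) := by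
      exact mul_le_mul_of_nonneg_left hkey he.le
  _ = φ ξ := by rw [← mul_assoc, hexp, one_mul]

/-- Subsolution comparison: if `c φ' ≤ H[φ] - (K+1)φ` off one point, then `φ ≤ Tφ`. -/
lemma Tmap_ge_of_subsol (D : OpData α K c f f') {φ : ℝ → ℝ} (hφc : Continuous φ)
    (hφr : ∀ ξ, φ ξ ∈ Icc (0:ℝ) 1) (p : ℝ)
    (hd : ∀ ξ, ξ ≠ p → ∃ d, HasDerivAt φ d ξ ∧ c * d ≤ Hop α K f φ ξ - (K+1) * φ ξ) :
    ∀ ξ, φ ξ ≤ Tmap α K f c φ ξ := by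
  intro ξ
  set ρ := (K+1)/c with hρ_def
  have hρc : ρ * c = K + 1 := by rw [hρ_def]; exact div_mul_cancel₀ _ (ne_of_gt D.hc)
  set J := fun x => ∫ s in Iic x, Real.exp (ρ * s) * Hop α K f φ s with hJ_def
  have hJd : ∀ x, HasDerivAt J (Real.exp (ρ * x) * Hop α K f φ x) x :=
    hasDerivAt_integral_Iic ((Real.continuous_exp.comp
      (continuous_const.mul continuous_id)).mul (Hop_cont hφc hφr D.hfc))
      (fun x => D.integrand_integrable hφc hφr x)
  have hJc : Continuous J := by
    rw [continuous_iff_continuousAt]; exact fun x => (hJd x).continuousAt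
  set ψ := fun s => (1/c) * J s - Real.exp (ρ * s) * φ s with hψ_def
  have hψc : Continuous ψ :=
    (continuous_const.mul hJc).sub
      ((Real.continuous_exp.comp (continuous_const.mul continuous_id)).mul hφc)
  have hψmono : ∀ x, x ≤ ξ → ψ x ≤ ψ ξ := by
    intro x hx
    apply mono_piece_exc (p := p) hx hψc
    intro t _ htp
    obtain ⟨d, hdd, hineq⟩ := hd t htp
    have hE : HasDerivAt (fun s : ℝ => Real.exp (ρ * s)) (ρ * Real.exp (ρ * t)) t := by
      have h1 : HasDerivAt (fun s : ℝ => ρ * s) ρ t := by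
        simpa using (hasDerivAt_id t).const_mul ρ
      rw [mul_comm ρ (Real.exp (ρ * t))]
      exact HasDerivAt.comp t (Real.hasDerivAt_exp (ρ * t)) h1
    refine ⟨_, ((hJd t).const_mul (1/c)).sub (hE.mul hdd), ?_⟩
    have hep := Real.exp_pos (ρ * t)
    have hc := D.hc
    rw [show (1/c) * (Real.exp (ρ * t) * Hop α K f φ t)
        - (ρ * Real.exp (ρ * t) * φ t + Real.exp (ρ * t) * d)
      = (Real.exp (ρ * t) / c) * (Hop α K f φ t - (ρ * c) * φ t - c * d) from by
        field_simp; ring]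
    apply mul_nonneg (by positivity)
    rw [hρc]
    linarith
  have hψlim : Tendsto ψ atBot (𝓝 0) := by
    have := ((D.J_tendsto_zero hφc hφr).const_mul (1/c)).sub (D.exp_phi_tendsto_zero hφr)
    rw [hψ_def, hJ_def]
    simpa using this
  have hψξ : 0 ≤ ψ ξ :=
    le_of_tendsto hψlim (eventually_atBot.2 ⟨ξ, hψmono⟩)
  have hkey : Real.exp (ρ * ξ) * φ ξ ≤ (1/c) * J ξ := by
    rw [hψ_def] at hψξ; simpa using hψξ
  have hTmap : Tmap α K f c φ ξ = (1/c) * (Real.exp (-(ρ * ξ)) * J ξ) := rfl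
  rw [hTmap]
  have hexp : Real.exp (-(ρ * ξ)) * Real.exp (ρ * ξ) = 1 := by
    rw [← Real.exp_add]; simp
  have he := Real.exp_pos (-(ρ * ξ))
  calc φ ξ = Real.exp (-(ρ * ξ)) * (Real.exp (ρ * ξ) * φ ξ) := by
        rw [← mul_assoc, hexp, one_mul]
  _ ≤ Real.exp (-(ρ * ξ)) * ((1/c) * J ξ) := mul_le_mul_of_nonneg_left hkey he.le
  _ = (1/c) * (Real.exp (-(ρ * ξ)) * J ξ) := by ring

end OpData

section LimitPassage

lemma intsol_of_limit {α c β Kf KL : ℝ} {f : ℝ → ℝ} {ι : Type*} {l : Filter ι} [l.NeBot]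
    {A B : ι → ℝ → ℝ} {cseq : ι → ℝ} {W : ℝ → ℝ}
    (hKL : 0 ≤ KL) (hKf : 0 ≤ Kf)
    (hA : ∀ i s t, |A i s - A i t| ≤ KL * |s - t|)
    (hB : ∀ i s t, |B i s - B i t| ≤ KL * |s - t|)
    (hpA : ∀ t, Tendsto (fun i => A i t) l (𝓝 (W t)))
    (hpB : ∀ t, Tendsto (fun i => B i t) l (𝓝 (W t)))
    (hc : Tendsto cseq l (𝓝 c))
    (hBr : ∀ i ξ, B i ξ ∈ Icc (0:ℝ) 1)
    (hWr : ∀ ξ, W ξ ∈ Icc (0:ℝ) 1)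
    (hflip : ∀ u ∈ Icc (0:ℝ) 1, ∀ v ∈ Icc (0:ℝ) 1, |f u - f v| ≤ Kf * |u - v|)
    (hrel : ∀ i x y, cseq i * (A i y - A i x)
      = ∫ t in x..y, ((1/6) * Dh α (B i) t + f (B i t) + β * (B i t - A i t))) :
    IntSol α f c W := by
  intro x y
  set F := fun (i : ι) (t : ℝ) => (1/6) * Dh α (B i) t + f (B i t) + β * (B i t - A i t)
    with hF
  set G := fun t => (1/6) * Dh α W t + f (W t) with hG
  set KK := 2 * KL + Kf * KL + |β| * (2 * KL) with hKK
  have hKK0 : 0 ≤ KK := by positivity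
  have hFL : ∀ i s t, |F i s - F i t| ≤ KK * |s - t| := by
    intro i s t
    have h1 : ∀ d : ℝ, |B i (s + d) - B i (t + d)| ≤ KL * |s - t| := fun d => by
      have := hB i (s + d) (t + d)
      simpa [add_sub_add_right_eq_sub] using this
    have h2 : ∀ d : ℝ, |B i (s - d) - B i (t - d)| ≤ KL * |s - t| := fun d => by
      have := hB i (s - d) (t - d)
      simpa [sub_sub_sub_cancel_right] using this
    have hDh : |Dh α (B i) s - Dh α (B i) t| ≤ 12 * (KL * |s - t|) := by
      have e1 := abs_le.1 (h1 (delta1 α)); have e1' := abs_le.1 (h2 (delta1 α))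
      have e2 := abs_le.1 (h1 (delta2 α)); have e2' := abs_le.1 (h2 (delta2 α))
      have e3 := abs_le.1 (h1 (delta3 α)); have e3' := abs_le.1 (h2 (delta3 α))
      have e0 := abs_le.1 (hB i s t)
      rw [abs_le]
      refine ⟨?_, ?_⟩
      · unfold Dh; linarith [e1.1, e1'.1, e2.1, e2'.1, e3.1, e3'.1, e0.1, e0.2]
      · unfold Dh; linarith [e1.2, e1'.2, e2.2, e2'.2, e3.2, e3'.2, e0.1, e0.2]
    have hfB : |f (B i s) - f (B i t)| ≤ Kf * (KL * |s - t|) := by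
      have := hflip _ (hBr i s) _ (hBr i t)
      have hb := hB i s t
      nlinarith [abs_nonneg (B i s - B i t)]
    have hβ : |β * (B i s - A i s) - β * (B i t - A i t)| ≤ |β| * (2 * (KL * |s - t|)) := by
      rw [show β * (B i s - A i s) - β * (B i t - A i t)
          = β * ((B i s - B i t) - (A i s - A i t)) from by ring, abs_mul]
      apply mul_le_mul_of_nonneg_left _ (abs_nonneg β)
      have hb := hB i s t
      have ha := hA i s t
      have := abs_sub (B i s - B i t) (A i s - A i t)
      calc |(B i s - B i t) - (A i s - A i t)| ≤ |B i s - B i t| + |A i s - A i t| :=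
        abs_sub _ _
      _ ≤ 2 * (KL * |s - t|) := by linarith
    have hd := abs_le.1 hDh
    have hf' := abs_le.1 hfB
    have hβ' := abs_le.1 hβ
    rw [hF, abs_le]
    constructor
    · simp only
      rw [hKK]
      nlinarith [abs_nonneg (s - t)]
    · simp only
      rw [hKK]
      nlinarith [abs_nonneg (s - t)]
  have hFp : ∀ t, Tendsto (fun i => F i t) l (𝓝 (G t)) := by
    intro t
    have hDh : Tendsto (fun i => Dh α (B i) t) l (𝓝 (Dh α W t)) := by
      unfold Dh
      exact ((((hpB (t + delta1 α)).add (hpB (t - delta1 α))).add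
        ((hpB (t + delta2 α)).add (hpB (t - delta2 α)))).add
        ((hpB (t + delta3 α)).add (hpB (t - delta3 α)))).sub ((hpB t).const_mul 6)
    have hfB : Tendsto (fun i => f (B i t)) l (𝓝 (f (W t))) := by
      rw [tendsto_iff_dist_tendsto_zero]
      have hb : ∀ i, dist (f (B i t)) (f (W t)) ≤ Kf * dist (B i t) (W t) := fun i => by
        rw [Real.dist_eq, Real.dist_eq]
        exact hflip _ (hBr i t) _ (hWr t)
      have h0 : Tendsto (fun i => Kf * dist (B i t) (W t)) l (𝓝 (Kf * 0)) :=
        (tendsto_iff_dist_tendsto_zero.1 (hpB t)).const_mul Kf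
      rw [mul_zero] at h0
      exact squeeze_zero (fun i => dist_nonneg) hb h0
    have := ((hDh.const_mul (1/6 : ℝ)).add hfB).add (((hpB t).sub (hpA t)).const_mul β)
    rw [hF, hG]
    simpa using this
  have h1 : Tendsto (fun i => cseq i * (A i y - A i x)) l (𝓝 (c * (W y - W x))) :=
    hc.mul ((hpA y).sub (hpA x))
  have h2 : Tendsto (fun i => cseq i * (A i y - A i x)) l (𝓝 (∫ t in x..y, G t)) := by
    have h3 := tendsto_intervalIntegral_of_equiLip hKK0 hFL hFp x y
    exact h3.congr fun i => (hrel i x y).symm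
  exact tendsto_nhds_unique h1 h2

end LimitPassage

section SuperSub

/-- Range/continuity/monotonicity of the supersolution. -/
lemma Usup_basic {lam : ℝ} (hlam : 0 < lam) :
    Continuous (fun x => min 1 (Real.exp (lam * x))) ∧
    (∀ ξ, (fun x => min 1 (Real.exp (lam * x))) ξ ∈ Icc (0:ℝ) 1) ∧
    Monotone (fun x => min 1 (Real.exp (lam * x))) := by
  refine ⟨continuous_const.min (Real.continuous_exp.comp (continuous_const.mul continuous_id)),
    fun ξ => ⟨le_min zero_le_one (Real.exp_pos _).le, min_le_left _ _⟩, ?_⟩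
  intro x y hxy
  exact min_le_min le_rfl (Real.exp_le_exp.2 (by nlinarith))

lemma Usup_supersol {α c lam a K : ℝ} {f f' : ℝ → ℝ} (hf : FisherKPP f f') (ha : a = f' 0)
    (hlam : 0 < lam) (hroot : gfun a α lam ≤ c * lam)
    (hm1 : MonotoneOn (fun s => K * s + f s) (Icc (0:ℝ) 1)) :
    ∀ ξ, ξ ≠ 0 → ∃ d, HasDerivAt (fun x => min 1 (Real.exp (lam * x))) d ξ ∧
      Hop α K f (fun x => min 1 (Real.exp (lam * x))) ξ
        - (K+1) * (min 1 (Real.exp (lam * ξ))) ≤ c * d := by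
  intro ξ hξ
  obtain ⟨hUc, hUr, hUm⟩ := Usup_basic (lam := lam) hlam
  rcases lt_or_gt_of_ne hξ with hneg | hpos
  · have hloc : ∀ t : ℝ, t < 0 → min 1 (Real.exp (lam * t)) = Real.exp (lam * t) := by
      intro t ht
      apply min_eq_right
      calc Real.exp (lam * t) ≤ Real.exp 0 := Real.exp_le_exp.2 (by nlinarith)
      _ = 1 := Real.exp_zero
    have hev : (fun x => min 1 (Real.exp (lam * x))) =ᶠ[𝓝 ξ] fun x => Real.exp (lam * x) := by
      filter_upwards [Iio_mem_nhds hneg] with t ht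
      exact hloc t ht
    have hE : HasDerivAt (fun x : ℝ => Real.exp (lam * x)) (lam * Real.exp (lam * ξ)) ξ := by
      have h1 : HasDerivAt (fun s : ℝ => lam * s) lam ξ := by
        simpa using (hasDerivAt_id ξ).const_mul lam
      rw [mul_comm lam (Real.exp (lam * ξ))]
      exact HasDerivAt.comp ξ (Real.hasDerivAt_exp (lam * ξ)) h1
    refine ⟨lam * Real.exp (lam * ξ), hE.congr_of_eventuallyEq hev, ?_⟩
    have heqξ : min 1 (Real.exp (lam * ξ)) = Real.exp (lam * ξ) := hloc ξ hneg
    have hDh : Dh α (fun x => min 1 (Real.exp (lam * x))) ξ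
        ≤ Dh α (fun x => Real.exp (lam * x)) ξ := by
      unfold Dh
      have hle : ∀ t : ℝ, min 1 (Real.exp (lam * t)) ≤ Real.exp (lam * t) :=
        fun t => min_le_right _ _
      have := hle (ξ + delta1 α); have := hle (ξ - delta1 α)
      have := hle (ξ + delta2 α); have := hle (ξ - delta2 α)
      have := hle (ξ + delta3 α); have := hle (ξ - delta3 α)
      beta_reduce
      rw [heqξ]
      linarith
    have hfb : f (min 1 (Real.exp (lam * ξ))) ≤ a * Real.exp (lam * ξ) := by
      rw [heqξ, ha]
      apply (hf.2.2.2.2.2 (Real.exp (lam * ξ)) ⟨Real.exp_pos _, ?_⟩).2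
      calc Real.exp (lam * ξ) < Real.exp 0 := Real.exp_lt_exp.2 (by nlinarith)
      _ = 1 := Real.exp_zero
    have hkey := Dh_exp α lam a ξ
    rw [Hop_eq]
    have hgl : gfun a α lam * Real.exp (lam * ξ) ≤ c * lam * Real.exp (lam * ξ) :=
      mul_le_mul_of_nonneg_right hroot (Real.exp_pos _).le
    linarith [hkey, hDh, hfb, hgl]
  · have hloc : ∀ t : ℝ, 0 < t → min 1 (Real.exp (lam * t)) = 1 := by
      intro t ht
      apply min_eq_left
      calc (1:ℝ) = Real.exp 0 := Real.exp_zero.symm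
      _ ≤ Real.exp (lam * t) := Real.exp_le_exp.2 (by nlinarith)
    have hev : (fun x => min 1 (Real.exp (lam * x))) =ᶠ[𝓝 ξ] fun _ => (1:ℝ) := by
      filter_upwards [Ioi_mem_nhds hpos] with t ht
      exact hloc t ht
    refine ⟨0, (hasDerivAt_const ξ (1:ℝ)).congr_of_eventuallyEq hev, ?_⟩
    rw [hloc ξ hpos, mul_zero]
    have := Hop_le_bound (α := α) hf.2.2.2.1 hm1 hUr ξ
    linarith

/-- Positivity region for the subsolution profile. -/
lemma hsub_pos_iff {lam ν q : ℝ} (hq : 0 < q) (hνlam : lam < ν) (ξ : ℝ) :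
    0 < Real.exp (lam * ξ) - q * Real.exp (ν * ξ) ↔ ξ < -Real.log q / (ν - lam) := by
  have he := Real.exp_pos (ν * ξ)
  have hA : (0:ℝ) < ν - lam := by linarith
  rw [sub_pos, ← lt_div_iff₀ he, ← Real.exp_sub]
  nth_rewrite 1 [← Real.exp_log hq]
  rw [Real.exp_lt_exp, lt_div_iff₀ hA]
  constructor <;> intro h <;> nlinarith

lemma wsub_basic {lam ν q : ℝ} (hlam : 0 < lam) (hνlam : lam < ν) (hq : 2 ≤ q) :
    Continuous (fun x => max 0 (Real.exp (lam * x) - q * Real.exp (ν * x))) ∧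
    (∀ ξ, (fun x => max 0 (Real.exp (lam * x) - q * Real.exp (ν * x))) ξ ∈ Icc (0:ℝ) 1) ∧
    (∀ ξ, (fun x => max 0 (Real.exp (lam * x) - q * Real.exp (ν * x))) ξ
        ≤ min 1 (Real.exp (lam * ξ))) := by
  have hq0 : (0:ℝ) < q := by linarith
  have hcont : Continuous (fun x => max 0 (Real.exp (lam * x) - q * Real.exp (ν * x))) :=
    continuous_const.max ((Real.continuous_exp.comp (continuous_const.mul continuous_id)).sub
      (continuous_const.mul (Real.continuous_exp.comp (continuous_const.mul continuous_id))))
  have hle_exp : ∀ ξ, max 0 (Real.exp (lam * ξ) - q * Real.exp (ν * ξ)) ≤ Real.exp (lam * ξ) := by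
    intro ξ
    apply max_le (Real.exp_pos _).le
    nlinarith [Real.exp_pos (ν * ξ)]
  have hle_one : ∀ ξ, max 0 (Real.exp (lam * ξ) - q * Real.exp (ν * ξ)) ≤ 1 := by
    intro ξ
    rcases le_or_gt (Real.exp (lam * ξ) - q * Real.exp (ν * ξ)) 0 with h | h
    · rw [max_eq_left h]; exact zero_le_one
    · have hξ0 : ξ < -Real.log q / (ν - lam) := (hsub_pos_iff hq0 hνlam ξ).1 h
      have hlq : 0 < Real.log q := Real.log_pos (by linarith)
      have hA : (0:ℝ) < ν - lam := by linarith
      have hξneg : ξ < 0 := lt_of_lt_of_le hξ0 (by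
        apply div_nonpos_of_nonpos_of_nonneg <;> linarith)
      calc max 0 (Real.exp (lam * ξ) - q * Real.exp (ν * ξ)) ≤ Real.exp (lam * ξ) := hle_exp ξ
      _ ≤ Real.exp 0 := Real.exp_le_exp.2 (by nlinarith)
      _ = 1 := Real.exp_zero
  exact ⟨hcont, fun ξ => ⟨le_max_left _ _, hle_one ξ⟩,
    fun ξ => le_min (hle_one ξ) (hle_exp ξ)⟩

lemma wsub_subsol {α c lam ν q a K N θ : ℝ} {f f' : ℝ → ℝ} (hf : FisherKPP f f')
    (ha : a = f' 0) (hθ : 0 < θ) (hθ1 : θ ≤ 1) (hN : 0 ≤ N)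
    (hH : ∀ s ∈ Set.Icc (0:ℝ) 1, a * s - N * s ^ (1 + θ) ≤ f s)
    (hlam : 0 < lam) (hνlam : lam < ν) (hνθ : ν ≤ (1 + θ) * lam)
    (hroot : gfun a α lam = c * lam) (hslack : gfun a α ν < c * ν)
    (hq : 2 ≤ q) (hqN : N ≤ q * (c * ν - gfun a α ν)) :
    ∀ ξ, ξ ≠ -Real.log q / (ν - lam) →
      ∃ d, HasDerivAt (fun x => max 0 (Real.exp (lam * x) - q * Real.exp (ν * x))) d ξ ∧
        c * d ≤ Hop α K f (fun x => max 0 (Real.exp (lam * x) - q * Real.exp (ν * x))) ξ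
          - (K+1) * (max 0 (Real.exp (lam * ξ) - q * Real.exp (ν * ξ))) := by
  intro ξ hξ
  have hq0 : (0:ℝ) < q := by linarith
  have hA : (0:ℝ) < ν - lam := by linarith
  obtain ⟨hwc, hwr, hwle⟩ := wsub_basic hlam hνlam hq
  rcases lt_or_gt_of_ne hξ with hlt | hgt
  · -- ξ < ξ₀ : locally the positive profile
    have hposifft := hsub_pos_iff hq0 hνlam
    have hloc : ∀ t : ℝ, t < -Real.log q / (ν - lam) →
        max 0 (Real.exp (lam * t) - q * Real.exp (ν * t))
          = Real.exp (lam * t) - q * Real.exp (ν * t) := by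
      intro t ht
      exact max_eq_right ((hposifft t).2 ht).le
    have hev : (fun x => max 0 (Real.exp (lam * x) - q * Real.exp (ν * x)))
        =ᶠ[𝓝 ξ] fun x => Real.exp (lam * x) - q * Real.exp (ν * x) := by
      filter_upwards [Iio_mem_nhds hlt] with t ht
      exact hloc t ht
    have hE : ∀ b : ℝ, HasDerivAt (fun x : ℝ => Real.exp (b * x)) (b * Real.exp (b * ξ)) ξ := by
      intro b
      have h1 : HasDerivAt (fun s : ℝ => b * s) b ξ := by
        simpa using (hasDerivAt_id ξ).const_mul b
      rw [mul_comm b (Real.exp (b * ξ))]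
      exact HasDerivAt.comp ξ (Real.hasDerivAt_exp (b * ξ)) h1
    have hD : HasDerivAt (fun x => Real.exp (lam * x) - q * Real.exp (ν * x))
        (lam * Real.exp (lam * ξ) - q * (ν * Real.exp (ν * ξ))) ξ :=
      (hE lam).sub ((hE ν).const_mul q)
    refine ⟨_, hD.congr_of_eventuallyEq hev, ?_⟩
    obtain ⟨h0, hh0⟩ : ∃ h0 : ℝ, h0 = Real.exp (lam * ξ) - q * Real.exp (ν * ξ) := ⟨_, rfl⟩
    have heqξ : max 0 (Real.exp (lam * ξ) - q * Real.exp (ν * ξ)) = h0 := by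
      rw [hh0]; exact hloc ξ hlt
    have hh0pos : 0 < h0 := by rw [hh0]; exact (hposifft ξ).2 hlt
    have hξneg : ξ < 0 := by
      have hlq : 0 < Real.log q := Real.log_pos (by linarith)
      exact lt_of_lt_of_le hlt (by apply div_nonpos_of_nonpos_of_nonneg <;> linarith)
    -- Dh of wsub dominates Dh of the profile
    have hDh : Dh α (fun x => Real.exp (lam * x) - q * Real.exp (ν * x)) ξ
        ≤ Dh α (fun x => max 0 (Real.exp (lam * x) - q * Real.exp (ν * x))) ξ := by
      unfold Dh
      have hge : ∀ t : ℝ, Real.exp (lam * t) - q * Real.exp (ν * t)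
          ≤ max 0 (Real.exp (lam * t) - q * Real.exp (ν * t)) := fun t => le_max_right _ _
      have := hge (ξ + delta1 α); have := hge (ξ - delta1 α)
      have := hge (ξ + delta2 α); have := hge (ξ - delta2 α)
      have := hge (ξ + delta3 α); have := hge (ξ - delta3 α)
      beta_reduce
      rw [heqξ]
      linarith
    -- Dh of the profile by linearity and the exponential identity
    have hDlin : Dh α (fun x => Real.exp (lam * x) - q * Real.exp (ν * x)) ξ
        = Dh α (fun x => Real.exp (lam * x)) ξ - q * Dh α (fun x => Real.exp (ν * x)) ξ := by
      unfold Dh; ring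
    have hkl := Dh_exp α lam a ξ
    have hkν := Dh_exp α ν a ξ
    -- nonlinear bound
    have hw01 : h0 ∈ Icc (0:ℝ) 1 := by rw [← heqξ]; simpa using hwr ξ
    have hfb : a * h0 - N * h0 ^ (1 + θ) ≤ f h0 := hH h0 hw01
    -- rpow estimate : h0^{1+θ} ≤ exp(ν ξ)
    have hrpow : h0 ^ (1 + θ) ≤ Real.exp (ν * ξ) := by
      have h1 : h0 ≤ Real.exp (lam * ξ) := by
        rw [hh0]; nlinarith [Real.exp_pos (ν * ξ)]
      have h2 : h0 ^ (1 + θ) ≤ Real.exp (lam * ξ) ^ (1 + θ) :=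
        Real.rpow_le_rpow hw01.1 h1 (by linarith)
      have h3 : Real.exp (lam * ξ) ^ (1 + θ) = Real.exp (lam * ξ * (1 + θ)) :=
        (Real.exp_mul _ _).symm
      have h4 : lam * ξ * (1 + θ) ≤ ν * ξ := by nlinarith
      calc h0 ^ (1 + θ) ≤ Real.exp (lam * ξ * (1 + θ)) := by rw [← h3]; exact h2
      _ ≤ Real.exp (ν * ξ) := Real.exp_le_exp.2 h4
    have hNb : N * h0 ^ (1 + θ) ≤ q * (c * ν - gfun a α ν) * Real.exp (ν * ξ) := by
      have hrp0 : 0 ≤ h0 ^ (1 + θ) := Real.rpow_nonneg hw01.1 _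
      have hcν : 0 ≤ q * (c * ν - gfun a α ν) := by nlinarith
      nlinarith [Real.exp_pos (ν * ξ)]
    have hEQ : (1/6) * Dh α (fun x => Real.exp (lam * x) - q * Real.exp (ν * x)) ξ + a * h0
        = gfun a α lam * Real.exp (lam * ξ) - q * (gfun a α ν * Real.exp (ν * ξ)) := by
      rw [hDlin, hh0]
      linear_combination hkl - q * hkν
    have hrootE : gfun a α lam * Real.exp (lam * ξ) = c * lam * Real.exp (lam * ξ) := by
      rw [hroot]
    rw [Hop_eq, heqξ]
    have k1 : gfun a α lam * Real.exp (lam * ξ) - q * (gfun a α ν * Real.exp (ν * ξ))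
          - N * h0 ^ (1 + θ)
        ≤ (1/6) * Dh α (fun x => Real.exp (lam * x) - q * Real.exp (ν * x)) ξ + f h0 := by
      linarith only [hEQ, hfb]
    have k3 : c * (lam * Real.exp (lam * ξ) - q * (ν * Real.exp (ν * ξ)))
        ≤ gfun a α lam * Real.exp (lam * ξ) - q * (gfun a α ν * Real.exp (ν * ξ))
          - N * h0 ^ (1 + θ) := by
      linarith only [hNb, hrootE]
    linarith only [k1, hDh, k3]
  · -- ξ > ξ₀ : locally zero
    have hloc : ∀ t : ℝ, -Real.log q / (ν - lam) < t →
        max 0 (Real.exp (lam * t) - q * Real.exp (ν * t)) = 0 := by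
      intro t ht
      apply max_eq_left
      by_contra hcon
      push_neg at hcon
      exact absurd ((hsub_pos_iff hq0 hνlam t).1 hcon) (by linarith)
    have hev : (fun x => max 0 (Real.exp (lam * x) - q * Real.exp (ν * x)))
        =ᶠ[𝓝 ξ] fun _ => (0:ℝ) := by
      filter_upwards [Ioi_mem_nhds hgt] with t ht
      exact hloc t ht
    refine ⟨0, (hasDerivAt_const ξ (0:ℝ)).congr_of_eventuallyEq hev, ?_⟩
    rw [hloc ξ hgt, mul_zero, Hop_eq, hloc ξ hgt, hf.2.2.1]
    have hDh : 0 ≤ Dh α (fun x => max 0 (Real.exp (lam * x) - q * Real.exp (ν * x))) ξ := by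
      unfold Dh
      have h1 : ∀ t : ℝ, (0:ℝ) ≤ max 0 (Real.exp (lam * t) - q * Real.exp (ν * t)) :=
        fun t => le_max_left _ _
      have := h1 (ξ + delta1 α); have := h1 (ξ - delta1 α)
      have := h1 (ξ + delta2 α); have := h1 (ξ - delta2 α)
      have := h1 (ξ + delta3 α); have := h1 (ξ - delta3 α)
      beta_reduce
      rw [hloc ξ hgt]
      linarith
    linarith

end SuperSub

section StrictCase

theorem exists_wave_strict (α : ℝ) (f f' : ℝ → ℝ) (hf : FisherKPP f f')
    (N θ : ℝ) (hN : 0 ≤ N) (hθ : θ ∈ Set.Ioc (0:ℝ) 1)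
    (hH : ∀ s ∈ Set.Icc (0:ℝ) 1, f' 0 * s - N * s ^ (1 + θ) ≤ f s)
    (c : ℝ) (hstrict : ∃ μ : ℝ, 0 < μ ∧ gfun (f' 0) α μ < c * μ) :
    ∃ U : ℝ → ℝ, IsTravelingWave α f c U ∧ Monotone U := by
  have ha : 0 < f' 0 := hf.2.2.2.2.1
  have hc : 0 < c := by
    obtain ⟨μ, hμ, hlt⟩ := hstrict
    have := gfun_ge (f' 0) α μ
    nlinarith
  obtain ⟨lam, ν, hlam, hroot, hν1, hν3, hslack0⟩ := exists_root_and_slack ha hθ.1 hstrict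
  obtain ⟨K, hK0, hKb, hm1, hm2⟩ := fisher_bound hf
  have D : OpData α K c f f' := ⟨hc, hK0, hf, hm1, hm2⟩
  have hslack : 0 < c * ν - gfun (f' 0) α ν := by linarith
  obtain ⟨q, hq_def⟩ : ∃ q : ℝ, q = max 2 (N / (c * ν - gfun (f' 0) α ν)) := ⟨_, rfl⟩
  have hq2 : 2 ≤ q := hq_def ▸ le_max_left _ _
  have hq0 : (0:ℝ) < q := by linarith
  have hqN : N ≤ q * (c * ν - gfun (f' 0) α ν) := by
    have h1 : N / (c * ν - gfun (f' 0) α ν) ≤ q := hq_def ▸ le_max_right _ _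
    rw [div_le_iff₀ hslack] at h1
    linarith
  obtain ⟨hUc, hUr, hUm⟩ := Usup_basic (lam := lam) hlam
  obtain ⟨hwc, hwr, hwle⟩ := wsub_basic hlam hν1 hq2
  have hsuper := Usup_supersol (α := α) (c := c) (K := K) hf rfl hlam (le_of_eq hroot) hm1
  have hsub := wsub_subsol (α := α) (c := c) (K := K) hf rfl hθ.1 hθ.2 hN hH hlam hν1 hν3
    hroot hslack0 hq2 hqN
  -- the iteration
  obtain ⟨seq, hseq0, hseqS⟩ : ∃ seq : ℕ → ℝ → ℝ,
      seq 0 = (fun x => min 1 (Real.exp (lam * x)))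
        ∧ ∀ n, seq (n+1) = Tmap α K f c (seq n) :=
    ⟨fun n => Nat.rec (fun x => min 1 (Real.exp (lam * x))) (fun _ V => Tmap α K f c V) n,
      rfl, fun n => rfl⟩
  have hinv : ∀ n, Continuous (seq n) ∧ (∀ ξ, seq n ξ ∈ Icc (0:ℝ) 1) ∧ Monotone (seq n) ∧
      (∀ ξ, (max 0 (Real.exp (lam * ξ) - q * Real.exp (ν * ξ))) ≤ seq n ξ) := by
    intro n
    induction n with
    | zero =>
      rw [hseq0]
      exact ⟨hUc, hUr, hUm, fun ξ => hwle ξ⟩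
    | succ n ih =>
      rw [hseqS n]
      refine ⟨D.Tmap_cont ih.1 ih.2.1, D.Tmap_range ih.1 ih.2.1,
        D.Tmap_monotone ih.1 ih.2.1 ih.2.2.1, fun ξ => ?_⟩
      calc max 0 (Real.exp (lam * ξ) - q * Real.exp (ν * ξ))
          ≤ Tmap α K f c (fun x => max 0 (Real.exp (lam * x) - q * Real.exp (ν * x))) ξ :=
            D.Tmap_ge_of_subsol hwc hwr _ hsub ξ
      _ ≤ Tmap α K f c (seq n) ξ :=
            D.Tmap_le_Tmap hwc ih.1 hwr ih.2.1 ih.2.2.2 ξ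
  have hdec : ∀ n, ∀ ξ, seq (n+1) ξ ≤ seq n ξ := by
    intro n
    induction n with
    | zero =>
      rw [hseqS 0, hseq0]
      exact fun ξ => D.Tmap_le_of_supersol hUc hUr 0 hsuper ξ
    | succ n ih =>
      intro ξ
      have hstep := D.Tmap_le_Tmap (hinv (n+1)).1 (hinv n).1 (hinv (n+1)).2.1
        (hinv n).2.1 ih ξ
      rw [← hseqS n, ← hseqS (n+1)] at hstep
      exact hstep
  have hbdB : ∀ ξ, BddBelow (range fun n => seq (n+1) ξ) := fun ξ =>
    ⟨0, by rintro _ ⟨n, rfl⟩; exact ((hinv (n+1)).2.1 ξ).1⟩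
  have hanti : ∀ ξ, Antitone fun n : ℕ => seq (n+1) ξ := fun ξ =>
    antitone_nat_of_succ_le fun n => hdec (n+1) ξ
  obtain ⟨W, hW_def⟩ : ∃ W : ℝ → ℝ, W = fun ξ => ⨅ n : ℕ, seq (n+1) ξ := ⟨_, rfl⟩
  have hWt : ∀ ξ, Tendsto (fun n : ℕ => seq (n+1) ξ) atTop (𝓝 (W ξ)) := by
    intro ξ
    rw [hW_def]
    exact tendsto_atTop_ciInf (hanti ξ) (hbdB ξ)
  have hlipn : ∀ n s t, |seq (n+1) s - seq (n+1) t| ≤ (2*(K+1)/c) * |s - t| := by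
    intro n
    rw [hseqS n]
    exact D.Tmap_lip (hinv n).1 (hinv n).2.1
  have hKL0 : (0:ℝ) ≤ 2*(K+1)/c := by positivity
  have hWlip : ∀ s t, |W s - W t| ≤ (2*(K+1)/c) * |s - t| := fun s t =>
    le_of_tendsto ((hWt s).sub (hWt t)).abs (Eventually.of_forall fun n => hlipn n s t)
  have hWc : Continuous W := cont_of_lip hKL0 hWlip
  have hWr : ∀ ξ, W ξ ∈ Icc (0:ℝ) 1 := fun ξ =>
    ⟨ge_of_tendsto (hWt ξ) (Eventually.of_forall fun n => ((hinv (n+1)).2.1 ξ).1),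
     le_of_tendsto (hWt ξ) (Eventually.of_forall fun n => ((hinv (n+1)).2.1 ξ).2)⟩
  have hWm : Monotone W := fun x y hxy =>
    le_of_tendsto_of_tendsto' (hWt x) (hWt y) fun n => (hinv (n+1)).2.2.1 hxy
  have hWw : ∀ ξ, max 0 (Real.exp (lam * ξ) - q * Real.exp (ν * ξ)) ≤ W ξ := fun ξ =>
    ge_of_tendsto (hWt ξ) (Eventually.of_forall fun n => (hinv (n+1)).2.2.2 ξ)
  have hWUs : ∀ ξ, W ξ ≤ Real.exp (lam * ξ) := by
    intro ξ
    have h1 : W ξ ≤ seq 1 ξ := by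
      rw [hW_def]
      exact ciInf_le (hbdB ξ) 0
    have h2 : seq 1 ξ ≤ seq 0 ξ := hdec 0 ξ
    have h3 : seq 0 ξ ≤ Real.exp (lam * ξ) := by rw [hseq0]; exact min_le_right _ _
    linarith
  have hrel : ∀ (n : ℕ) (x y : ℝ), c * (seq (n+2) y - seq (n+2) x)
      = ∫ t in x..y, ((1/6) * Dh α (seq (n+1)) t + f (seq (n+1) t)
          + (K+1) * (seq (n+1) t - seq (n+2) t)) := by
    intro n x y
    have h1 := D.Tmap_rel (hinv (n+1)).1 (hinv (n+1)).2.1 x y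
    rw [← hseqS (n+1)] at h1
    rw [h1]
    apply intervalIntegral.integral_congr
    intro t _
    beta_reduce
    rw [Hop_eq, show seq (n+1+1) = seq (n+2) from rfl]
    ring
  have hKf := fisher_lip hf hm1 hm2
  have hWtA : ∀ t, Tendsto (fun n : ℕ => seq (n+2) t) atTop (𝓝 (W t)) := by
    intro t
    exact (hWt t).comp (tendsto_add_atTop_nat 1)
  have hIntSol : IntSol α f c W :=
    intsol_of_limit (β := K+1) (cseq := fun _ : ℕ => c)
      (A := fun n => seq (n+2)) (B := fun n => seq (n+1)) (KL := 2*(K+1)/c) (Kf := K)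
      hKL0 hK0 (fun n => hlipn (n+1)) hlipn hWtA hWt tendsto_const_nhds
      (fun n ξ => (hinv (n+1)).2.1 ξ) hWr hKf hrel
  obtain ⟨hCD, hODE⟩ := intsol_regular (ne_of_gt hc) hWc hWr D.hfc hIntSol
  have hexp0 : Tendsto (fun ξ : ℝ => Real.exp (lam * ξ)) atBot (𝓝 0) :=
    Real.tendsto_exp_atBot.comp (Tendsto.const_mul_atBot hlam tendsto_id)
  have hbot : Tendsto W atBot (𝓝 0) :=
    tendsto_of_tendsto_of_tendsto_of_le_of_le tendsto_const_nhds hexp0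
      (fun ξ => (hWr ξ).1) hWUs
  obtain ⟨L, hLmem, hLt, hfL, hWle⟩ :=
    intsol_limit_top hc hWc hWm hWr D.hfc (fisher_nonneg hf) hIntSol
  -- positivity of the subsolution somewhere
  have hA : (0:ℝ) < ν - lam := by linarith
  obtain ⟨ξs, hξs⟩ : ∃ ξs : ℝ, 0 < Real.exp (lam * ξs) - q * Real.exp (ν * ξs) := by
    refine ⟨(-Real.log q - 1) / (ν - lam), (hsub_pos_iff hq0 hν1 _).2 ?_⟩
    rw [div_lt_div_iff₀ hA hA]
    nlinarith
  have hL1 : L = 1 := by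
    rcases fisher_zero hf hLmem hfL with h0 | h1
    · exfalso
      have h2 := hWle ξs
      have h3 := hWw ξs
      have h4 : Real.exp (lam * ξs) - q * Real.exp (ν * ξs)
          ≤ max 0 (Real.exp (lam * ξs) - q * Real.exp (ν * ξs)) := le_max_right _ _
      rw [h0] at h2
      linarith
    · exact h1
  exact ⟨W, ⟨hCD, hWr, hODE, hbot, hL1 ▸ hLt⟩, hWm⟩

end StrictCase

section Final

lemma Dh_shift (α : ℝ) (U : ℝ → ℝ) (b t : ℝ) :
    Dh α (fun ξ => U (ξ + b)) t = Dh α U (t + b) := by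
  simp only [Dh]
  rw [show t + delta1 α + b = t + b + delta1 α from by ring,
      show t - delta1 α + b = t + b - delta1 α from by ring,
      show t + delta2 α + b = t + b + delta2 α from by ring,
      show t - delta2 α + b = t + b - delta2 α from by ring,
      show t + delta3 α + b = t + b + delta3 α from by ring,
      show t - delta3 α + b = t + b - delta3 α from by ring]

lemma wave_package {α cc K : ℝ} {f f' U : ℝ → ℝ} (hf : FisherKPP f f') (hc : 0 < cc)
    (hK0 : 0 ≤ K)
    (hKlip : ∀ u ∈ Icc (0:ℝ) 1, ∀ v ∈ Icc (0:ℝ) 1, |f u - f v| ≤ K * |u - v|)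
    (hW : IsTravelingWave α f cc U) :
    IntSol α f cc U ∧ (∀ s t, |U s - U t| ≤ ((2+K)/cc) * |s - t|) := by
  obtain ⟨hCD, hr, hODE, hb, ht⟩ := hW
  have hUc : Continuous U := hCD.continuous
  have hfc : ∀ s ∈ Icc (0:ℝ) 1, ContinuousAt f s := fun s hs => (hf.1 s hs).continuousAt
  have hGc : Continuous (fun t => (1/6) * Dh α U t + f (U t)) := continuous_rhs hUc hr hfc
  have hder : ∀ ξ, HasDerivAt U (((1/6) * Dh α U ξ + f (U ξ)) / cc) ξ := by
    intro ξ
    have h1 : HasDerivAt U (deriv U ξ) ξ :=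
      ((hCD.differentiable one_ne_zero) ξ).hasDerivAt
    have h2 : deriv U ξ = ((1/6) * Dh α U ξ + f (U ξ)) / cc := by
      have := hODE ξ
      field_simp
      linarith
    rwa [h2] at h1
  have hGb : ∀ t, |(1/6) * Dh α U t + f (U t)| ≤ 2 + K := by
    intro t
    have hDh : |Dh α U t| ≤ 12 := by
      have h1 := hr (t + delta1 α); have h2 := hr (t - delta1 α)
      have h3 := hr (t + delta2 α); have h4 := hr (t - delta2 α)
      have h5 := hr (t + delta3 α); have h6 := hr (t - delta3 α)
      have h0 := hr t
      rw [abs_le]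
      unfold Dh
      constructor
      · linarith [h1.1, h2.1, h3.1, h4.1, h5.1, h6.1, h0.2]
      · linarith [h1.2, h2.2, h3.2, h4.2, h5.2, h6.2, h0.1]
    have hfb : |f (U t)| ≤ K := by
      have := hKlip _ (hr t) 0 (left_mem_Icc.2 zero_le_one)
      rw [hf.2.2.1] at this
      simp only [sub_zero] at this
      calc |f (U t)| ≤ K * |U t| := this
      _ ≤ K * 1 := by
          apply mul_le_mul_of_nonneg_left _ hK0
          rw [abs_le]
          exact ⟨by linarith [(hr t).1], (hr t).2⟩
      _ = K := mul_one K
    calc |(1/6) * Dh α U t + f (U t)| ≤ |(1/6) * Dh α U t| + |f (U t)| := abs_add_le _ _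
    _ = (1/6) * |Dh α U t| + |f (U t)| := by rw [abs_mul]; norm_num
    _ ≤ 2 + K := by linarith
  constructor
  · intro x y
    have h1 := intervalIntegral.integral_eq_sub_of_hasDerivAt
      (f := U) (f' := fun t => ((1/6) * Dh α U t + f (U t)) / cc)
      (fun t _ => hder t) ((hGc.div_const cc).intervalIntegrable x y)
    rw [← h1]
    rw [intervalIntegral.integral_div]
    field_simp
  · apply lips_of_deriv
    intro t
    refine ⟨_, hder t, ?_⟩
    rw [abs_div, abs_of_pos hc, div_le_div_iff₀ hc hc]
    have := hGb t
    nlinarith [hGb t]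

theorem stmt4' (α : ℝ) (f f' : ℝ → ℝ) (hf : FisherKPP f f')
    (N θ : ℝ) (hN : 0 ≤ N) (hθ : θ ∈ Set.Ioc (0:ℝ) 1)
    (hH : ∀ s ∈ Set.Icc (0:ℝ) 1, f' 0 * s - N * s ^ (1 + θ) ≤ f s)
    (c : ℝ) (hc : cstar (f' 0) α ≤ c) :
    ∃ U : ℝ → ℝ, IsTravelingWave α f c U ∧ Monotone U := by
  have ha : 0 < f' 0 := hf.2.2.2.2.1
  have hcpos : 0 < c := c_pos_of_ge_cstar ha hc
  have hSne : {b : ℝ | ∃ l : ℝ, 0 < l ∧ b = gfun (f' 0) α l / l}.Nonempty :=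
    ⟨gfun (f' 0) α 1 / 1, 1, one_pos, rfl⟩
  -- strict slack from any c' > cstar
  have hslack_of : ∀ c' : ℝ, cstar (f' 0) α < c' → ∃ μ : ℝ, 0 < μ ∧ gfun (f' 0) α μ < c' * μ := by
    intro c' hc'
    obtain ⟨b, hbmem, hblt⟩ := exists_lt_of_csInf_lt hSne hc'
    obtain ⟨l, hl, rfl⟩ := hbmem
    refine ⟨l, hl, ?_⟩
    rw [div_lt_iff₀ hl] at hblt
    linarith
  rcases lt_or_eq_of_le hc with hlt | heq
  · exact exists_wave_strict α f f' hf N θ hN hθ hH c (hslack_of c hlt)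
  -- boundary case : c = cstar ; approximate with cₙ = c + 1/(n+1)
  obtain ⟨K, hK0, hKb, hm1, hm2⟩ := fisher_bound hf
  have hKlip := fisher_lip hf hm1 hm2
  set cs : ℕ → ℝ := fun n => c + 1/(n+1) with hcs_def
  have hcs_pos : ∀ n, 0 < cs n := fun n => by
    have : (0:ℝ) < 1/(n+1) := by positivity
    simp only [hcs_def]; linarith
  have hcs_gt : ∀ n, cstar (f' 0) α < cs n := fun n => by
    have : (0:ℝ) < 1/(n+1) := by positivity
    simp only [hcs_def]; linarith
  have hcs_ge : ∀ n, c ≤ cs n := fun n => by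
    have : (0:ℝ) < 1/(n+1) := by positivity
    simp only [hcs_def]; linarith
  have hcs_tend : Tendsto cs atTop (𝓝 c) := by
    have h0 : Tendsto (fun n : ℕ => 1/((n:ℝ)+1)) atTop (𝓝 0) :=
      tendsto_one_div_add_atTop_nhds_zero_nat
    have := h0.const_add c
    simpa [hcs_def] using this
  -- waves for each n, normalized at 0
  have hwaves : ∀ n : ℕ, ∃ V : ℝ → ℝ, IntSol α f (cs n) V ∧ Monotone V ∧
      (∀ ξ, V ξ ∈ Icc (0:ℝ) 1) ∧ (∀ s t, |V s - V t| ≤ ((2+K)/c) * |s - t|) ∧ V 0 = 1/2 := by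
    intro n
    obtain ⟨U, hU, hUm⟩ := exists_wave_strict α f f' hf N θ hN hθ hH (cs n)
      (hslack_of (cs n) (hcs_gt n))
    obtain ⟨hIntU, hUlip⟩ := wave_package hf (hcs_pos n) hK0 hKlip hU
    obtain ⟨hCD, hr, hODE, hbot, htop⟩ := hU
    -- find b with U b = 1/2
    have hUc : Continuous U := hCD.continuous
    have e1 : ∃ x₁, U x₁ < 1/2 :=
      (hbot.eventually_lt_const (show (0:ℝ) < 1/2 by norm_num)).exists
    have e2 : ∃ x₂, 1/2 < U x₂ :=
      (htop.eventually_const_lt (show (1:ℝ)/2 < 1 by norm_num)).exists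
    obtain ⟨x₁, hx₁⟩ := e1
    obtain ⟨x₂, hx₂⟩ := e2
    obtain ⟨b, hb⟩ := intermediate_value_univ x₁ x₂ hUc ⟨le_of_lt hx₁, le_of_lt hx₂⟩
    refine ⟨fun ξ => U (ξ + b), ?_, fun x y hxy => hUm (by linarith), fun ξ => hr _, ?_, by
      simpa using hb⟩
    · intro x y
      have h1 := hIntU (x + b) (y + b)
      have h2 : ∫ t in x+b..y+b, ((1/6) * Dh α U t + f (U t))
          = ∫ t in x..y, ((1/6) * Dh α U (t + b) + f (U (t + b))) :=
        (intervalIntegral.integral_comp_add_right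
          (fun t => (1/6) * Dh α U t + f (U t)) b).symm
      rw [h2] at h1
      rw [h1]
      apply intervalIntegral.integral_congr
      intro t _
      beta_reduce
      rw [Dh_shift]
    · intro s t
      have := hUlip (s + b) (t + b)
      have hcc : (2+K)/(cs n) ≤ (2+K)/c := by
        apply div_le_div_of_nonneg_left (by linarith) hcpos (hcs_ge n)
      have habs : |s + b - (t + b)| = |s - t| := by rw [add_sub_add_right_eq_sub]
      rw [habs] at this
      calc |U (s+b) - U (t+b)| ≤ (2+K)/(cs n) * |s - t| := this
      _ ≤ (2+K)/c * |s - t| := mul_le_mul_of_nonneg_right hcc (abs_nonneg _)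
  choose V hIntV hVm hVr hVlip hV0 using hwaves
  -- ultrafilter limit
  set 𝒰 : Ultrafilter ℕ := Ultrafilter.of atTop with h𝒰
  have h𝒰le : (𝒰 : Filter ℕ) ≤ atTop := Ultrafilter.of_le atTop
  have hlim : ∀ ξ : ℝ, ∃ L, L ∈ Icc (0:ℝ) 1 ∧
      Tendsto (fun n => V n ξ) (𝒰 : Filter ℕ) (𝓝 L) := by
    intro ξ
    have h1 : (𝒰.map (fun n => V n ξ) : Filter ℝ) ≤ 𝓟 (Icc (0:ℝ) 1) := by
      rw [Ultrafilter.coe_map, Filter.le_principal_iff, Filter.mem_map]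
      exact Filter.univ_mem' fun n => hVr n ξ
    obtain ⟨L, hLmem, hLle⟩ := isCompact_Icc.ultrafilter_le_nhds (𝒰.map fun n => V n ξ) h1
    rw [Ultrafilter.coe_map] at hLle
    exact ⟨L, hLmem, hLle⟩
  choose W hWr hWt using hlim
  have instNB : (𝒰 : Filter ℕ).NeBot := Ultrafilter.neBot 𝒰
  have hKL0 : (0:ℝ) ≤ (2+K)/c := by positivity
  -- the relation in the limit-lemma format (β = 0)
  have hrel : ∀ (n : ℕ) (x y : ℝ), cs n * (V n y - V n x)
      = ∫ t in x..y, ((1/6) * Dh α (V n) t + f (V n t) + 0 * (V n t - V n t)) := by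
    intro n x y
    rw [hIntV n x y]
    apply intervalIntegral.integral_congr
    intro t _
    ring
  have hIntW : IntSol α f c W :=
    intsol_of_limit (β := 0) (cseq := cs) (A := V) (B := V) (KL := (2+K)/c) (Kf := K)
      hKL0 hK0 hVlip hVlip hWt hWt (hcs_tend.mono_left h𝒰le) (fun n ξ => hVr n ξ)
      hWr hKlip hrel
  -- properties of W
  have hWlip : ∀ s t, |W s - W t| ≤ ((2+K)/c) * |s - t| := fun s t =>
    le_of_tendsto ((hWt s).sub (hWt t)).abs (Eventually.of_forall fun n => hVlip n s t)
  have hWc : Continuous W := cont_of_lip hKL0 hWlip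
  have hWm : Monotone W := fun x y hxy =>
    le_of_tendsto_of_tendsto' (hWt x) (hWt y) fun n => hVm n hxy
  have hW0 : W 0 = 1/2 := by
    have h1 : Tendsto (fun n => V n 0) (𝒰 : Filter ℕ) (𝓝 (1/2)) := by
      have : (fun n => V n 0) = fun _ : ℕ => (1:ℝ)/2 := funext fun n => hV0 n
      rw [this]
      exact tendsto_const_nhds
    exact tendsto_nhds_unique (hWt 0) h1
  have hfc : ∀ s ∈ Icc (0:ℝ) 1, ContinuousAt f s := fun s hs => (hf.1 s hs).continuousAt
  obtain ⟨hCD, hODE⟩ := intsol_regular (ne_of_gt hcpos) hWc hWr hfc hIntW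
  obtain ⟨Lt, hLtmem, hLtt, hfLt, hLtub⟩ :=
    intsol_limit_top hcpos hWc hWm hWr hfc (fisher_nonneg hf) hIntW
  obtain ⟨Lb, hLbmem, hLbt, hfLb, hLblb⟩ :=
    intsol_limit_bot hcpos hWc hWm hWr hfc (fisher_nonneg hf) hIntW
  have hLt1 : Lt = 1 := by
    rcases fisher_zero hf hLtmem hfLt with h0 | h1
    · exfalso; have := hLtub 0; rw [hW0, h0] at this; linarith
    · exact h1
  have hLb0 : Lb = 0 := by
    rcases fisher_zero hf hLbmem hfLb with h0 | h1
    · exact h0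
    · exfalso; have := hLblb 0; rw [hW0, h1] at this; linarith
  exact ⟨W, ⟨hCD, hWr, hODE, hLb0 ▸ hLbt, hLt1 ▸ hLtt⟩, hWm⟩

end Final


theorem stmt4 (α : ℝ) (f f' : ℝ → ℝ) (hf : FisherKPP f f')
    (N θ : ℝ) (hN : 0 ≤ N) (hθ : θ ∈ Set.Ioc (0:ℝ) 1)
    (hH : ∀ s ∈ Set.Icc (0:ℝ) 1, f' 0 * s - N * s ^ (1 + θ) ≤ f s)
    (c : ℝ) (hc : cstar (f' 0) α ≤ c) :
    ∃ U : ℝ → ℝ, IsTravelingWave α f c U ∧ Monotone U :=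
  stmt4' α f f' hf N θ hN hθ hH c hc
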